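/- arXiv:1603.09162 — 5 statements merged into one kernel-verified Lean document; each statement's English description precedes it below -/
import Mathlib

section
/- Let f : [0,1]^d → ℝ be continuous and φ₁(x) = max{y : (x,y) ∈ H_f} where H_f is the convex hull of the graph of f. Then for any x₀ ∈ [0,1]^d there exist points x₁, …, x_{d+1} ∈ [0,1]^d and weights p₁, …, p_{d+1} ≥ 0 with ∑ pᵢ = 1 such that x₀ = ∑ pᵢ xᵢ, f(xᵢ) = φ₁(xᵢ) for each i, and φ₁(x₀) = ∑ pᵢ f(xᵢ). -/
open Set Metric Filter

noncomputable section

def Cube (d : ℕ) : Set (Fin d → ℝ) := Set.Icc 0 1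

def graphHull (d : ℕ) (f : (Fin d → ℝ) → ℝ) : Set ((Fin d → ℝ) × ℝ) :=
  convexHull ℝ {p : (Fin d → ℝ) × ℝ | p.1 ∈ Cube d ∧ p.2 = f p.1}

def phi1 (d : ℕ) (f : (Fin d → ℝ) → ℝ) (x : Fin d → ℝ) : ℝ :=
  sSup {y : ℝ | (x, y) ∈ graphHull d f}

/-- Padding lemma: a nonnegative combination indexed by a fintype `ι` with at most `n`
elements can be re-indexed by `Fin n`. -/
lemma pad_combination {ι : Type*} [Fintype ι] (i₀ : ι) {n : ℕ}
    (hcard : Fintype.card ι ≤ n) (w : ι → ℝ) (hw : ∀ i, 0 ≤ w i) :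
    ∃ (p : Fin n → ℝ) (y : Fin n → ι), (∀ j, 0 ≤ p j) ∧
      ∀ (M : Type*) [AddCommMonoid M] [Module ℝ M] (F : ι → M),
        ∑ j, p j • F (y j) = ∑ i, w i • F i := by
  classical
  have hcard' : Fintype.card ι ≤ Fintype.card (Fin n) := by simpa using hcard
  obtain ⟨emb⟩ := Function.Embedding.nonempty_of_card_le hcard'
  refine ⟨fun j => if h : ∃ i, emb i = j then w h.choose else 0,
    fun j => if h : ∃ i, emb i = j then h.choose else i₀, ?_, ?_⟩
  · intro j
    by_cases h : ∃ i, emb i = j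
    · simp only [dif_pos h]; exact hw _
    · simp [dif_neg h]
  · intro M _ _ F
    have key : ∀ i : ι,
        (if h : ∃ i', emb i' = emb i then w h.choose else 0) = w i ∧
        (if h : ∃ i', emb i' = emb i then h.choose else i₀) = i := by
      intro i
      have h : ∃ i', emb i' = emb i := ⟨i, rfl⟩
      have hc : h.choose = i := emb.injective h.choose_spec
      rw [dif_pos h, dif_pos h, hc]
      exact ⟨rfl, rfl⟩
    calc ∑ j : Fin n, (if h : ∃ i, emb i = j then w h.choose else 0) •
            F (if h : ∃ i, emb i = j then h.choose else i₀)
        = ∑ j ∈ Finset.univ.map emb, (if h : ∃ i, emb i = j then w h.choose else 0) •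
            F (if h : ∃ i, emb i = j then h.choose else i₀) := by
          refine (Finset.sum_subset (Finset.subset_univ _) ?_).symm
          intro j _ hj
          have : ¬∃ i, emb i = j := by
            intro ⟨i, hi⟩
            exact hj (Finset.mem_map.2 ⟨i, Finset.mem_univ _, hi⟩)
          rw [dif_neg this, zero_smul]
      _ = ∑ i, w i • F i := by
          rw [Finset.sum_map]
          refine Finset.sum_congr rfl fun i _ => ?_
          rw [(key i).1, (key i).2]

lemma finrank_prod_fin (d : ℕ) :
    Module.finrank ℝ ((Fin d → ℝ) × ℝ) = d + 1 := by
  simp [Module.finrank_prod]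

/-- Carathéodory extraction with explicit cardinality bound in `(Fin d → ℝ) × ℝ`. -/
lemma exists_caratheodory {d : ℕ} {s : Set ((Fin d → ℝ) × ℝ)} {x : (Fin d → ℝ) × ℝ}
    (hx : x ∈ convexHull ℝ s) :
    ∃ (ι : Type) (_ : Fintype ι) (z : ι → (Fin d → ℝ) × ℝ) (w : ι → ℝ),
      Nonempty ι ∧ Fintype.card ι ≤ d + 2 ∧ Set.range z ⊆ s ∧ AffineIndependent ℝ z ∧
      (∀ i, 0 < w i) ∧ ∑ i, w i = 1 ∧ ∑ i, w i • z i = x := by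
  obtain ⟨ι, hfin, z, w, hrange, hindep, hpos, hsum, hcomb⟩ :=
    eq_pos_convex_span_of_mem_convexHull hx
  refine ⟨ι, hfin, z, w, ?_, ?_, hrange, hindep, hpos, hsum, hcomb⟩
  · by_contra h
    have : IsEmpty ι := not_nonempty_iff.1 h
    simp [Finset.univ_eq_empty] at hsum
  · have h1 := hindep.card_le_finrank_succ
    have h2 : Module.finrank ℝ (vectorSpan ℝ (Set.range z)) ≤
        Module.finrank ℝ ((Fin d → ℝ) × ℝ) := Submodule.finrank_le _
    rw [finrank_prod_fin] at h2
    omega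

/-- Compactness of the convex hull of a compact set in `(Fin d → ℝ) × ℝ`. -/
lemma isCompact_convexHull' {d : ℕ} {s : Set ((Fin d → ℝ) × ℝ)} (hs : IsCompact s) :
    IsCompact (convexHull ℝ s) := by
  classical
  set T := (fun wz : (Fin (d+2) → ℝ) × (Fin (d+2) → (Fin d → ℝ) × ℝ) =>
      ∑ i, wz.1 i • wz.2 i) '' ((stdSimplex ℝ (Fin (d+2))) ×ˢ Set.univ.pi fun _ => s) with hT
  have hTc : IsCompact T := by
    refine (((isCompact_stdSimplex _ _).prod (isCompact_univ_pi fun _ => hs)).image ?_)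
    refine continuous_finset_sum _ fun i _ => ?_
    exact ((continuous_apply i).comp continuous_fst).smul
      ((continuous_apply i).comp continuous_snd)
  have hEq : convexHull ℝ s = T := by
    apply subset_antisymm
    · intro x hx
      obtain ⟨ι, hfin, z, w, hne, hcard, hrange, _, hpos, hsum, hcomb⟩ := exists_caratheodory hx
      obtain ⟨i₀⟩ := hne
      obtain ⟨p, y, hp0, hkey⟩ := pad_combination i₀ hcard w (fun i => (hpos i).le)
      refine ⟨(p, fun j => z (y j)), ⟨⟨hp0, ?_⟩, fun j _ => hrange ⟨y j, rfl⟩⟩, ?_⟩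
      · have := hkey ℝ (fun _ => (1:ℝ))
        simpa [hsum] using this
      · have := hkey ((Fin d → ℝ) × ℝ) z
        simpa [hcomb] using this
    · rintro x ⟨⟨w, z⟩, ⟨⟨hw0, hw1⟩, hz⟩, rfl⟩
      exact (convex_convexHull ℝ s).sum_mem (fun i _ => hw0 i) hw1
        (fun i _ => subset_convexHull ℝ s (hz i (Set.mem_univ i)))
  rw [hEq]; exact hTc

lemma graph_compact {d : ℕ} {f : (Fin d → ℝ) → ℝ} (hf : ContinuousOn f (Cube d)) :
    IsCompact {p : (Fin d → ℝ) × ℝ | p.1 ∈ Cube d ∧ p.2 = f p.1} := by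
  have hset : {p : (Fin d → ℝ) × ℝ | p.1 ∈ Cube d ∧ p.2 = f p.1}
      = (fun x => (x, f x)) '' Cube d := by
    ext ⟨a, b⟩
    constructor
    · rintro ⟨ha, hb⟩; exact ⟨a, ha, by simp at hb ⊢; exact hb.symm⟩
    · rintro ⟨x, hx, hxe⟩
      obtain ⟨h1, h2⟩ := Prod.mk.injEq .. ▸ hxe
      exact ⟨h1 ▸ hx, by simp [← h1, h2.symm]⟩
  rw [hset]
  exact (isCompact_Icc).image_of_continuousOn (continuousOn_id.prodMk hf)

lemma hull_compact {d : ℕ} {f : (Fin d → ℝ) → ℝ} (hf : ContinuousOn f (Cube d)) :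
    IsCompact (graphHull d f) := isCompact_convexHull' (graph_compact hf)

/-- The supremum defining `phi1` is attained and is an upper bound. -/
lemma phi1_spec {d : ℕ} {f : (Fin d → ℝ) → ℝ} (hf : ContinuousOn f (Cube d))
    {x : Fin d → ℝ} (hx : x ∈ Cube d) :
    (x, phi1 d f x) ∈ graphHull d f ∧ ∀ y, (x, y) ∈ graphHull d f → y ≤ phi1 d f x := by
  set S := {y : ℝ | (x, y) ∈ graphHull d f} with hS
  have hne : f x ∈ S := subset_convexHull ℝ _ ⟨hx, rfl⟩
  have hH := hull_compact hf
  have hScl : IsClosed S := hH.isClosed.preimage (Continuous.prodMk_right x)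
  have hsub : S ⊆ Prod.snd '' graphHull d f := fun y hy => ⟨(x, y), hy, rfl⟩
  have hScpt : IsCompact S := (hH.image continuous_snd).of_isClosed_subset hScl hsub
  have hmem : sSup S ∈ S := hScpt.sSup_mem ⟨f x, hne⟩
  exact ⟨hmem, fun y hy => le_csSup hScpt.bddAbove hy⟩

/-- Lemma 2.3: every point is a convex combination of at most `d+1` points of the
coincidence set, realizing the value of `φ₁`. -/
theorem phi1_caratheodory (d : ℕ) (f : (Fin d → ℝ) → ℝ)
    (hf : ContinuousOn f (Cube d)) :
    ∀ x₀ ∈ Cube d, ∃ (x : Fin (d + 1) → (Fin d → ℝ)) (p : Fin (d + 1) → ℝ),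
      (∀ i, 0 ≤ p i) ∧ (∑ i, p i = 1) ∧ (∀ i, x i ∈ Cube d) ∧
      x₀ = ∑ i, p i • x i ∧
      (∀ i, f (x i) = phi1 d f (x i)) ∧
      phi1 d f x₀ = ∑ i, p i * f (x i) := by
  intro x₀ hx₀
  obtain ⟨hmem, hmax⟩ := phi1_spec hf hx₀
  obtain ⟨ι, hfin, z, w, hne, hcard, hrange, hindep, hpos, hsum, hcomb⟩ :=
    exists_caratheodory hmem
  obtain ⟨i₀⟩ := hne
  have hzG : ∀ i, (z i).1 ∈ Cube d ∧ (z i).2 = f (z i).1 := fun i => hrange ⟨i, rfl⟩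
  have hfst : ∑ i, w i • (z i).1 = x₀ := by
    have := congrArg Prod.fst hcomb
    simpa [Prod.fst_sum] using this
  have hsnd : ∑ i, w i • (z i).2 = phi1 d f x₀ := by
    have := congrArg Prod.snd hcomb
    simpa [Prod.snd_sum] using this
  -- pointwise inequality f ≤ φ₁ at the points z i
  have hle : ∀ i, (z i).2 ≤ phi1 d f (z i).1 := by
    intro i
    refine (phi1_spec hf (hzG i).1).2 _ ?_
    have : z i ∈ graphHull d f := subset_convexHull ℝ _ ⟨(hzG i).1, (hzG i).2⟩
    simpa using this
  -- concavity-type upper bound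
  have hub : ∑ i, w i • phi1 d f (z i).1 ≤ phi1 d f x₀ := by
    have hcv : (∑ i, w i • ((z i).1, phi1 d f (z i).1)) ∈ graphHull d f :=
      (convex_convexHull ℝ _).sum_mem (fun i _ => (hpos i).le) hsum
        (fun i _ => (phi1_spec hf (hzG i).1).1)
    have heq : (∑ i, w i • ((z i).1, phi1 d f (z i).1))
        = (x₀, ∑ i, w i • phi1 d f (z i).1) := by
      refine Prod.ext ?_ ?_
      · simpa [Prod.fst_sum] using hfst
      · simp [Prod.snd_sum]
    rw [heq] at hcv
    exact hmax _ hcv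
  -- coincidence at the points z i
  have hco : ∀ i, phi1 d f (z i).1 = (z i).2 := by
    have hsum0 : ∑ i, w i * (phi1 d f (z i).1 - (z i).2) = 0 := by
      have h1 : ∑ i, w i * (phi1 d f (z i).1 - (z i).2)
          = (∑ i, w i • phi1 d f (z i).1) - ∑ i, w i • (z i).2 := by
        rw [← Finset.sum_sub_distrib]
        exact Finset.sum_congr rfl fun i _ => by simp [smul_eq_mul]; ring
      have h2 : ∑ i, w i * (phi1 d f (z i).1 - (z i).2) ≤ 0 := by
        rw [h1, hsnd]; linarith
      have h3 : 0 ≤ ∑ i, w i * (phi1 d f (z i).1 - (z i).2) :=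
        Finset.sum_nonneg fun i _ => mul_nonneg (hpos i).le (sub_nonneg.2 (hle i))
      linarith
    intro i
    have := (Finset.sum_eq_zero_iff_of_nonneg
      (fun i _ => mul_nonneg (hpos i).le (sub_nonneg.2 (hle i)))).1 hsum0 i (Finset.mem_univ i)
    rcases mul_eq_zero.1 this with h | h
    · exact absurd h (hpos i).ne'
    · linarith
  -- cardinality bound d+1 via interior argument
  have hcard1 : Fintype.card ι ≤ d + 1 := by
    by_contra hgt
    have hcardeq : Fintype.card ι = d + 2 := le_antisymm hcard (by omega)
    have htop : affineSpan ℝ (Set.range z) = ⊤ :=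
      hindep.affineSpan_eq_top_iff_card_eq_finrank_add_one.2
        (by rw [hcardeq, finrank_prod_fin])
    let b : AffineBasis ι ℝ ((Fin d → ℝ) × ℝ) := ⟨z, hindep, htop⟩
    have hbz : ⇑b = z := rfl
    have hptc : (x₀, phi1 d f x₀) = Finset.univ.affineCombination ℝ z w := by
      rw [Finset.univ.affineCombination_eq_linear_combination z w hsum]
      exact hcomb.symm
    have hint : (x₀, phi1 d f x₀) ∈ interior (convexHull ℝ (Set.range ⇑b)) := by
      rw [b.interior_convexHull]
      intro i
      rw [hptc]
      have : Finset.univ.affineCombination ℝ z w = Finset.univ.affineCombination ℝ ⇑b w := by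
        rw [hbz]
      rw [this, b.coord_apply_combination_of_mem (Finset.mem_univ i) hsum]
      exact hpos i
    have hsubset : convexHull ℝ (Set.range ⇑b) ⊆ graphHull d f := by
      rw [hbz]
      exact convexHull_min (subset_trans hrange (subset_convexHull ℝ _)) (convex_convexHull ℝ _)
    have hint2 : (x₀, phi1 d f x₀) ∈ interior (graphHull d f) :=
      interior_mono hsubset hint
    obtain ⟨ε, hε, hball⟩ := Metric.isOpen_iff.1 isOpen_interior _ hint2
    have hmem2 : (x₀, phi1 d f x₀ + ε / 2) ∈ graphHull d f := by
      refine interior_subset (hball ?_)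
      rw [mem_ball, Prod.dist_eq]
      simp [Real.dist_eq, abs_of_pos hε]
      linarith
    have := hmax _ hmem2
    linarith
  -- pad and conclude
  obtain ⟨p, y, hp0, hkey⟩ := pad_combination i₀ hcard1 w (fun i => (hpos i).le)
  refine ⟨fun j => (z (y j)).1, p, hp0, ?_, fun j => (hzG (y j)).1, ?_, ?_, ?_⟩
  · have := hkey ℝ (fun _ => (1 : ℝ))
    simpa [hsum] using this
  · rw [hkey (Fin d → ℝ) (fun i => (z i).1), hfst]
  · intro j
    exact ((hzG (y j)).2).symm.trans (hco (y j)).symm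
  · have h := hkey ℝ (fun i => (z i).2)
    rw [hsnd] at h
    rw [← h]
    refine Finset.sum_congr rfl fun j _ => ?_
    rw [smul_eq_mul, (hzG (y j)).2]
end
end

section
/- Let f : [0,1]^d → ℝ be continuous, φ₁ the concave function on top of the convex hull of the graph of f, and E₁ = {x ∈ [0,1]^d : φ₁(x) = f(x)} the coincidence set. Then E₁ is nonempty and closed, and every point of [0,1]^d lies in the convex hull of E₁ in the sense that φ₁(x₀) is a convex combination of values f(xᵢ) with xᵢ ∈ E₁. -/
open Set Metric Filter

noncomputable section

/-- The coincidence set of `f` and the top of the convex hull of its graph. -/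
def coincidenceSet (d : ℕ) (f : (Fin d → ℝ) → ℝ) : Set (Fin d → ℝ) :=
  {x | x ∈ Cube d ∧ phi1 d f x = f x}

namespace CoincidenceAux

variable {d : ℕ} {f : (Fin d → ℝ) → ℝ}

lemma graphSet_eq (d : ℕ) (f : (Fin d → ℝ) → ℝ) :
    {p : (Fin d → ℝ) × ℝ | p.1 ∈ Cube d ∧ p.2 = f p.1} = (fun x => (x, f x)) '' Cube d := by
  ext ⟨a, b⟩
  constructor
  · rintro ⟨h1, h2⟩; dsimp only at h2; exact ⟨a, h1, by dsimp only; rw [h2]⟩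
  · rintro ⟨x, hx, h⟩; cases h; exact ⟨hx, rfl⟩

lemma isCompact_cube : IsCompact (Cube d) := isCompact_Icc

lemma zero_mem_cube : (0 : Fin d → ℝ) ∈ Cube d := Set.mem_Icc.mpr ⟨le_rfl, zero_le_one⟩

lemma isCompact_graph (hf : ContinuousOn f (Cube d)) :
    IsCompact ((fun x => (x, f x)) '' Cube d) :=
  isCompact_cube.image_of_continuousOn (continuousOn_id.prodMk hf)

lemma sum_dite_pad {M : Type*} [AddCommMonoid M] {ι : Type*} [Fintype ι] {m : ℕ}
    (hm : Fintype.card ι ≤ m) (e : ι ≃ Fin (Fintype.card ι)) (F : ι → M) :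
    (∑ k : Fin m, if h : (k : ℕ) < Fintype.card ι then F (e.symm ⟨(k : ℕ), h⟩) else 0)
      = ∑ i, F i := by
  classical
  set G : ℕ → M := fun k => if h : k < Fintype.card ι then F (e.symm ⟨k, h⟩) else 0 with hG
  calc (∑ k : Fin m, if h : (k : ℕ) < Fintype.card ι then F (e.symm ⟨(k : ℕ), h⟩) else 0)
      = ∑ k ∈ Finset.range m, G k := Fin.sum_univ_eq_sum_range G m
    _ = ∑ k ∈ Finset.range (Fintype.card ι), G k := by
        refine (Finset.sum_subset (Finset.range_subset_range.mpr hm) fun k _ hk => ?_).symm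
        simp only [hG]
        rw [dif_neg (Finset.mem_range.not.mp hk)]
    _ = ∑ k : Fin (Fintype.card ι), G k := (Fin.sum_univ_eq_sum_range G (Fintype.card ι)).symm
    _ = ∑ k : Fin (Fintype.card ι), F (e.symm k) := by
        refine Finset.sum_congr rfl fun k _ => ?_
        simp only [hG]
        rw [dif_pos k.isLt]
    _ = ∑ i, F i := Equiv.sum_comp e.symm F

lemma pad_repr {m : ℕ} {s : Set ((Fin d → ℝ) × ℝ)} {q : (Fin d → ℝ) × ℝ}
    {ι : Type} [Fintype ι] (z : ι → (Fin d → ℝ) × ℝ) (w : ι → ℝ)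
    (hm : Fintype.card ι ≤ m) (g₀ : (Fin d → ℝ) × ℝ) (hg₀ : g₀ ∈ s)
    (hz : ∀ i, z i ∈ s) (hw0 : ∀ i, 0 ≤ w i) (hw1 : ∑ i, w i = 1)
    (hq : ∑ i, w i • z i = q) :
    ∃ (z' : Fin m → (Fin d → ℝ) × ℝ) (w' : Fin m → ℝ),
      (∀ k, z' k ∈ s) ∧ (∀ k, 0 ≤ w' k) ∧ (∑ k, w' k = 1) ∧ ∑ k, w' k • z' k = q := by
  classical
  set e := Fintype.equivFin ι with he
  refine ⟨fun k => if h : (k : ℕ) < Fintype.card ι then z (e.symm ⟨(k : ℕ), h⟩) else g₀,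
    fun k => if h : (k : ℕ) < Fintype.card ι then w (e.symm ⟨(k : ℕ), h⟩) else 0, ?_, ?_, ?_, ?_⟩
  · intro k; dsimp only; split_ifs; exacts [hz _, hg₀]
  · intro k; dsimp only; split_ifs; exacts [hw0 _, le_rfl]
  · exact (sum_dite_pad hm e w).trans hw1
  · have hsc : ∀ k : Fin m,
        (if h : (k : ℕ) < Fintype.card ι then w (e.symm ⟨(k : ℕ), h⟩) else 0) •
          (if h : (k : ℕ) < Fintype.card ι then z (e.symm ⟨(k : ℕ), h⟩) else g₀)
        = (if h : (k : ℕ) < Fintype.card ι then w (e.symm ⟨(k : ℕ), h⟩) • z (e.symm ⟨(k : ℕ), h⟩) else 0) := by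
      intro k; by_cases h : (k : ℕ) < Fintype.card ι <;> simp [h]
    rw [Finset.sum_congr rfl fun k _ => hsc k]
    exact (sum_dite_pad hm e fun i => w i • z i).trans hq

lemma finrank_E : Module.finrank ℝ ((Fin d → ℝ) × ℝ) = d + 1 := by
  simp [Module.finrank_prod, Module.finrank_pi]

lemma card_le_of_affineIndependent {ι : Type} [Fintype ι] {z : ι → (Fin d → ℝ) × ℝ}
    (hind : AffineIndependent ℝ z) : Fintype.card ι ≤ d + 2 := by
  have h1 := hind.card_le_finrank_succ
  have h2 := Submodule.finrank_le (vectorSpan ℝ (Set.range z))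
  have h3 : Module.finrank ℝ ((Fin d → ℝ) × ℝ) = d + 1 := finrank_E
  omega

lemma isCompact_graphHull (hf : ContinuousOn f (Cube d)) : IsCompact (graphHull d f) := by
  rw [graphHull, graphSet_eq]
  set G := (fun x => (x, f x)) '' Cube d with hGdef
  have hGc : IsCompact G := isCompact_graph hf
  have hGne : ((0 : Fin d → ℝ), f 0) ∈ G := ⟨0, zero_mem_cube, rfl⟩
  have key : convexHull ℝ G =
      (fun q : (Fin (d + 2) → ℝ) × (Fin (d + 2) → (Fin d → ℝ) × ℝ) => ∑ i, q.1 i • q.2 i) ''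
        (stdSimplex ℝ (Fin (d + 2)) ×ˢ Set.univ.pi fun _ => G) := by
    apply Subset.antisymm
    · intro p hp
      obtain ⟨ι, hfin, z, w, hzG, hind, hwpos, hw1, hzq⟩ :=
        eq_pos_convex_span_of_mem_convexHull hp
      letI := hfin
      have hcard : Fintype.card ι ≤ d + 2 := card_le_of_affineIndependent hind
      obtain ⟨z', w', hz', hw0', hw1', hq'⟩ :=
        pad_repr z w hcard _ hGne (fun i => hzG ⟨i, rfl⟩) (fun i => (hwpos i).le) hw1 hzq
      exact ⟨(w', z'), ⟨⟨hw0', hw1'⟩, fun i _ => hz' i⟩, hq'⟩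
    · rintro p ⟨⟨w, z⟩, ⟨⟨hw0, hw1⟩, hzm⟩, rfl⟩
      exact (convex_convexHull ℝ G).sum_mem (fun i _ => hw0 i) hw1
        (fun i _ => subset_convexHull ℝ G (hzm i (Set.mem_univ i)))
  rw [key]
  refine IsCompact.image ?_ ?_
  · exact (isCompact_stdSimplex ℝ _).prod (isCompact_univ_pi fun _ => hGc)
  · exact continuous_finset_sum _ fun i _ =>
      ((continuous_apply i).comp continuous_fst).smul ((continuous_apply i).comp continuous_snd)

lemma mem_hull_graph {x : Fin d → ℝ} (hx : x ∈ Cube d) : (x, f x) ∈ graphHull d f := by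
  have h : (x, f x) ∈ {p : (Fin d → ℝ) × ℝ | p.1 ∈ Cube d ∧ p.2 = f p.1} := ⟨hx, rfl⟩
  exact subset_convexHull ℝ _ h

lemma bddAbove_slice (hf : ContinuousOn f (Cube d)) (x : Fin d → ℝ) :
    BddAbove {y : ℝ | (x, y) ∈ graphHull d f} := by
  have h := ((isCompact_graphHull hf).image continuous_snd).bddAbove
  refine h.mono fun y hy => ?_
  exact Set.mem_image_of_mem Prod.snd hy

lemma isClosed_slice (hf : ContinuousOn f (Cube d)) (x : Fin d → ℝ) :
    IsClosed {y : ℝ | (x, y) ∈ graphHull d f} :=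
  (isCompact_graphHull hf).isClosed.preimage (Continuous.prodMk_right x)

lemma phi1_mem (hf : ContinuousOn f (Cube d)) {x : Fin d → ℝ} (hx : x ∈ Cube d) :
    (x, phi1 d f x) ∈ graphHull d f :=
  (isClosed_slice hf x).csSup_mem ⟨f x, mem_hull_graph hx⟩ (bddAbove_slice hf x)

lemma le_phi1 (hf : ContinuousOn f (Cube d)) {x : Fin d → ℝ} {y : ℝ}
    (h : (x, y) ∈ graphHull d f) : y ≤ phi1 d f x :=
  le_csSup (bddAbove_slice hf x) h

lemma f_le_phi1 (hf : ContinuousOn f (Cube d)) {x : Fin d → ℝ} (hx : x ∈ Cube d) :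
    f x ≤ phi1 d f x := le_phi1 hf (mem_hull_graph hx)

lemma exists_repr (hf : ContinuousOn f (Cube d)) {x₀ : Fin d → ℝ} (hx₀ : x₀ ∈ Cube d) :
    ∃ (x : Fin (d + 1) → (Fin d → ℝ)) (p : Fin (d + 1) → ℝ),
      (∀ i, 0 ≤ p i) ∧ (∑ i, p i = 1) ∧ (∀ i, x i ∈ coincidenceSet d f) ∧
      x₀ = ∑ i, p i • x i ∧ phi1 d f x₀ = ∑ i, p i * f (x i) := by
  classical
  have hconv : Convex ℝ (graphHull d f) := by rw [graphHull]; exact convex_convexHull ℝ _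
  have hq : (x₀, phi1 d f x₀) ∈ graphHull d f := phi1_mem hf hx₀
  rw [graphHull] at hq
  obtain ⟨ι, hfin, z, w, hzS, hind, hwpos, hw1, hzq⟩ := eq_pos_convex_span_of_mem_convexHull hq
  letI := hfin
  have hz : ∀ i, (z i).1 ∈ Cube d ∧ (z i).2 = f ((z i).1) := fun i => hzS ⟨i, rfl⟩
  have hx : ∑ i, w i • (z i).1 = x₀ := by
    have h := congrArg Prod.fst hzq
    simpa [Prod.fst_sum] using h
  have hy : ∑ i, w i * (z i).2 = phi1 d f x₀ := by
    have h := congrArg Prod.snd hzq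
    simpa [Prod.snd_sum, smul_eq_mul] using h
  have hy' : ∑ i, w i * f ((z i).1) = phi1 d f x₀ := by
    rw [← hy]; exact Finset.sum_congr rfl fun i _ => by rw [(hz i).2]
  -- every point in the representation lies in the coincidence set
  have hkey : ∀ i, (z i).1 ∈ coincidenceSet d f := by
    have hcomb : ((x₀ : Fin d → ℝ), ∑ i, w i * phi1 d f ((z i).1)) ∈ graphHull d f := by
      have hmem := hconv.sum_mem (t := Finset.univ) (fun i _ => (hwpos i).le) hw1
        (fun i _ => phi1_mem hf (hz i).1)
      have hpt : (∑ i, w i • (((z i).1 : Fin d → ℝ), phi1 d f ((z i).1)))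
          = ((x₀ : Fin d → ℝ), ∑ i, w i * phi1 d f ((z i).1)) := by
        refine Prod.ext ?_ ?_
        · simpa [Prod.fst_sum] using hx
        · simp [Prod.snd_sum, smul_eq_mul]
      rw [hpt] at hmem
      exact hmem
    have h2 : ∑ i, w i * phi1 d f ((z i).1) ≤ phi1 d f x₀ := le_phi1 hf hcomb
    have h5 : ∀ i ∈ Finset.univ, (0:ℝ) ≤ w i * (phi1 d f ((z i).1) - f ((z i).1)) := fun i _ =>
      mul_nonneg (hwpos i).le (sub_nonneg.mpr (f_le_phi1 hf (hz i).1))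
    have h4 : ∑ i, w i * (phi1 d f ((z i).1) - f ((z i).1)) = 0 := by
      have hsplit : ∑ i, w i * (phi1 d f ((z i).1) - f ((z i).1))
          = (∑ i, w i * phi1 d f ((z i).1)) - ∑ i, w i * f ((z i).1) := by
        rw [← Finset.sum_sub_distrib]
        exact Finset.sum_congr rfl fun i _ => by ring
      refine le_antisymm ?_ (Finset.sum_nonneg h5)
      rw [hsplit, hy']; linarith
    intro i
    have h6 := (Finset.sum_eq_zero_iff_of_nonneg h5).mp h4 i (Finset.mem_univ i)
    have h7 : phi1 d f ((z i).1) - f ((z i).1) = 0 := by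
      rcases mul_eq_zero.mp h6 with h | h
      · exact absurd h (hwpos i).ne'
      · exact h
    exact ⟨(hz i).1, by linarith⟩
  -- at most d+1 points are needed
  have hcard : Fintype.card ι ≤ d + 1 := by
    have hcard2 : Fintype.card ι ≤ d + 2 := card_le_of_affineIndependent hind
    by_contra hlt
    have hcardeq : Fintype.card ι = d + 2 := by omega
    have htop : affineSpan ℝ (Set.range z) = ⊤ :=
      hind.affineSpan_eq_top_iff_card_eq_finrank_add_one.mpr (by rw [finrank_E]; omega)
    let b : AffineBasis ι ℝ ((Fin d → ℝ) × ℝ) := ⟨z, hind, htop⟩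
    have hqi : (x₀, phi1 d f x₀) ∈ interior (convexHull ℝ (Set.range z)) := by
      have hbz : Set.range ⇑b = Set.range z := rfl
      rw [← hbz, b.interior_convexHull]
      intro i
      have hco : b.coord i (x₀, phi1 d f x₀) = w i := by
        rw [← hzq, ← Finset.univ.affineCombination_eq_linear_combination z w hw1]
        exact b.coord_apply_combination_of_mem (Finset.mem_univ i) hw1
      rw [hco]; exact hwpos i
    have hsub : interior (convexHull ℝ (Set.range z)) ⊆ interior (graphHull d f) := by
      apply interior_mono
      rw [graphHull]; exact convexHull_mono hzS
    obtain ⟨ε, hε, hball⟩ := Metric.isOpen_iff.mp isOpen_interior _ (hsub hqi)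
    have hmem : ((x₀ : Fin d → ℝ), phi1 d f x₀ + ε / 2) ∈ graphHull d f := by
      apply interior_subset
      apply hball
      rw [Metric.mem_ball, Prod.dist_eq]
      have hd : dist (phi1 d f x₀ + ε / 2) (phi1 d f x₀) = ε / 2 := by
        rw [Real.dist_eq, show phi1 d f x₀ + ε / 2 - phi1 d f x₀ = ε / 2 by ring]
        exact abs_of_pos (by linarith)
      rw [dist_self, hd]
      exact max_lt hε (by linarith)
    have := le_phi1 hf hmem
    linarith
  have hne : Nonempty ι := by
    rcases isEmpty_or_nonempty ι with h | h
    · exfalso; rw [Finset.univ_eq_empty, Finset.sum_empty] at hw1; exact one_ne_zero hw1.symm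
    · exact h
  obtain ⟨i₀⟩ := hne
  obtain ⟨z', w', hz', hw0', hw1', hq'⟩ := pad_repr (m := d + 1)
    (s := {p : (Fin d → ℝ) × ℝ | p.1 ∈ coincidenceSet d f ∧ p.2 = f p.1}) z w hcard (z i₀)
    ⟨hkey i₀, (hz i₀).2⟩ (fun i => ⟨hkey i, (hz i).2⟩) (fun i => (hwpos i).le) hw1 hzq
  refine ⟨fun k => (z' k).1, w', hw0', hw1', fun k => (hz' k).1, ?_, ?_⟩
  · have h := congrArg Prod.fst hq'
    simp only [Prod.fst_sum, Prod.smul_fst] at h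
    exact h.symm
  · have h := congrArg Prod.snd hq'
    simp only [Prod.snd_sum, Prod.smul_snd, smul_eq_mul] at h
    rw [← h]
    exact (Finset.sum_congr rfl fun k _ => by rw [(hz' k).2]).symm

def sfun (x x' : Fin d → ℝ) (j : Fin d) : ℝ :=
  min (if x j = 0 then 1 else min 1 (x' j / x j))
      (if x j = 1 then 1 else min 1 ((1 - x' j) / (1 - x j)))

def tmap (x x' u : Fin d → ℝ) : Fin d → ℝ := fun j => x' j + sfun x x' j * (u j - x j)

lemma cube_coord {x : Fin d → ℝ} (hx : x ∈ Cube d) (j : Fin d) : 0 ≤ x j ∧ x j ≤ 1 := by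
  rw [Cube, Set.mem_Icc] at hx
  exact ⟨hx.1 j, hx.2 j⟩

lemma sfun_nonneg {x x' : Fin d → ℝ} (hx : x ∈ Cube d) (hx' : x' ∈ Cube d) (j : Fin d) :
    0 ≤ sfun x x' j := by
  obtain ⟨h0, h1⟩ := cube_coord hx j
  obtain ⟨h0', h1'⟩ := cube_coord hx' j
  unfold sfun
  apply le_min <;> split_ifs with h
  · norm_num
  · exact le_min zero_le_one (div_nonneg h0' h0)
  · norm_num
  · exact le_min zero_le_one (div_nonneg (by linarith) (by linarith))

lemma sfun_mul_le {x x' : Fin d → ℝ} (hx : x ∈ Cube d) (hx' : x' ∈ Cube d) (j : Fin d) :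
    sfun x x' j * x j ≤ x' j := by
  obtain ⟨h0, h1⟩ := cube_coord hx j
  obtain ⟨h0', h1'⟩ := cube_coord hx' j
  by_cases h : x j = 0
  · rw [h, mul_zero]; exact h0'
  · have hpos : 0 < x j := lt_of_le_of_ne h0 (Ne.symm h)
    have hs : sfun x x' j ≤ x' j / x j := by
      refine le_trans (min_le_left _ _) ?_
      rw [if_neg h]
      exact min_le_right _ _
    calc sfun x x' j * x j ≤ x' j / x j * x j :=
          mul_le_mul_of_nonneg_right hs h0
      _ = x' j := div_mul_cancel₀ _ (ne_of_gt hpos)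

lemma sfun_mul_le' {x x' : Fin d → ℝ} (hx : x ∈ Cube d) (hx' : x' ∈ Cube d) (j : Fin d) :
    sfun x x' j * (1 - x j) ≤ 1 - x' j := by
  obtain ⟨h0, h1⟩ := cube_coord hx j
  obtain ⟨h0', h1'⟩ := cube_coord hx' j
  by_cases h : x j = 1
  · rw [h]; simp; linarith
  · have hpos : 0 < 1 - x j := by cases lt_or_eq_of_le h1 with
      | inl h2 => linarith
      | inr h2 => exact absurd h2 h
    have hs : sfun x x' j ≤ (1 - x' j) / (1 - x j) := by
      refine le_trans (min_le_right _ _) ?_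
      rw [if_neg h]
      exact min_le_right _ _
    calc sfun x x' j * (1 - x j) ≤ (1 - x' j) / (1 - x j) * (1 - x j) :=
          mul_le_mul_of_nonneg_right hs (by linarith)
      _ = 1 - x' j := div_mul_cancel₀ _ (ne_of_gt hpos)

lemma tmap_mem {x x' u : Fin d → ℝ} (hx : x ∈ Cube d) (hx' : x' ∈ Cube d) (hu : u ∈ Cube d) :
    tmap x x' u ∈ Cube d := by
  rw [Cube, Set.mem_Icc]
  constructor <;> intro j
  · obtain ⟨hu0, hu1⟩ := cube_coord hu j
    obtain ⟨h0', h1'⟩ := cube_coord hx' j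
    have hs0 := sfun_nonneg hx hx' j
    have hsm := sfun_mul_le hx hx' j
    have hmono : sfun x x' j * (0 - x j) ≤ sfun x x' j * (u j - x j) :=
      mul_le_mul_of_nonneg_left (by linarith) hs0
    show (0:ℝ) ≤ x' j + sfun x x' j * (u j - x j)
    nlinarith
  · obtain ⟨hu0, hu1⟩ := cube_coord hu j
    obtain ⟨h0', h1'⟩ := cube_coord hx' j
    have hs0 := sfun_nonneg hx hx' j
    have hsm := sfun_mul_le' hx hx' j
    have hmono : sfun x x' j * (u j - x j) ≤ sfun x x' j * (1 - x j) :=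
      mul_le_mul_of_nonneg_left (by linarith) hs0
    show x' j + sfun x x' j * (u j - x j) ≤ 1
    nlinarith

lemma sfun_self {x : Fin d → ℝ} (hx : x ∈ Cube d) (j : Fin d) : sfun x x j = 1 := by
  obtain ⟨h0, h1⟩ := cube_coord hx j
  unfold sfun
  split_ifs with hA hB hB
  · norm_num
  · rw [div_self (by intro h; exact hB (by linarith) : (1:ℝ) - x j ≠ 0)]
    norm_num
  · rw [div_self hA]
    norm_num
  · rw [div_self hA, div_self (by intro h; exact hB (by linarith) : (1:ℝ) - x j ≠ 0)]
    norm_num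

lemma tmap_self {x u : Fin d → ℝ} (hx : x ∈ Cube d) : tmap x x u = u := by
  funext j
  rw [tmap, sfun_self hx j]
  ring

lemma tendsto_tmap {x : Fin d → ℝ} (hx : x ∈ Cube d) (u : Fin d → ℝ) :
    Tendsto (fun x' => tmap x x' u) (nhds x) (nhds u) := by
  have hc : Continuous fun x' : Fin d → ℝ => tmap x x' u := by
    apply continuous_pi
    intro j
    refine Continuous.add (continuous_apply j) (Continuous.mul ?_ continuous_const)
    unfold sfun
    refine Continuous.min ?_ ?_ <;> split_ifs
    · exact continuous_const
    · exact Continuous.min continuous_const ((continuous_apply j).div_const _)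
    · exact continuous_const
    · exact Continuous.min continuous_const
        ((continuous_const.sub (continuous_apply j)).div_const _)
  have h2 := hc.tendsto x
  rwa [tmap_self hx] at h2

lemma isClosed_coincidence (hf : ContinuousOn f (Cube d)) : IsClosed (coincidenceSet d f) := by
  refine isClosed_of_closure_subset fun x hxcl => ?_
  have hsub : coincidenceSet d f ⊆ Cube d := fun y hy => hy.1
  have hxC : x ∈ Cube d := by
    have h := closure_mono hsub hxcl
    have hcc : IsClosed (Cube d) := isClosed_Icc
    rwa [hcc.closure_eq] at h
  have hconv : Convex ℝ (graphHull d f) := by rw [graphHull]; exact convex_convexHull ℝ _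
  have hq : (x, phi1 d f x) ∈ graphHull d f := phi1_mem hf hxC
  rw [graphHull] at hq
  obtain ⟨ι, hfin, z, w, hzS, hind, hwpos, hw1, hzq⟩ := eq_pos_convex_span_of_mem_convexHull hq
  letI := hfin
  have hz : ∀ i, (z i).1 ∈ Cube d ∧ (z i).2 = f ((z i).1) := fun i => hzS ⟨i, rfl⟩
  have hxeq : ∑ i, w i • (z i).1 = x := by
    have h := congrArg Prod.fst hzq
    simpa [Prod.fst_sum] using h
  have hyeq : ∑ i, w i * f ((z i).1) = phi1 d f x := by
    have h := congrArg Prod.snd hzq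
    simp only [Prod.snd_sum, Prod.smul_snd, smul_eq_mul] at h
    rw [← h]
    exact Finset.sum_congr rfl fun i _ => by rw [(hz i).2]
  set A : (Fin d → ℝ) → ℝ := fun x' => ∑ i, w i * f (tmap x x' ((z i).1)) with hA
  have hcomb : ∀ x' : Fin d → ℝ, ∑ i, w i • tmap x x' ((z i).1) = x' := by
    intro x'
    funext j
    have hxj : ∑ i, w i * (z i).1 j = x j := by
      have h := congrFun hxeq j
      simpa [Finset.sum_apply] using h
    simp only [Finset.sum_apply, Pi.smul_apply, smul_eq_mul, tmap]
    have hterm : ∀ i : ι, w i * (x' j + sfun x x' j * ((z i).1 j - x j))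
        = w i * x' j + sfun x x' j * (w i * (z i).1 j) - sfun x x' j * (w i * x j) :=
      fun i => by ring
    rw [Finset.sum_congr rfl fun i _ => hterm i, Finset.sum_sub_distrib,
      Finset.sum_add_distrib, ← Finset.sum_mul, ← Finset.mul_sum, ← Finset.mul_sum,
      ← Finset.sum_mul, hw1, hxj]
    ring
  have hlow : ∀ x' ∈ Cube d, A x' ≤ phi1 d f x' := by
    intro x' hx'
    apply le_phi1 hf
    have hmem := hconv.sum_mem (t := Finset.univ) (fun i _ => (hwpos i).le) hw1
      (fun i _ => mem_hull_graph (f := f) (tmap_mem hxC hx' (hz i).1))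
    have hpt : (∑ i, w i • ((tmap x x' ((z i).1) : Fin d → ℝ), f (tmap x x' ((z i).1))))
        = ((x' : Fin d → ℝ), A x') := by
      refine Prod.ext ?_ ?_
      · simpa [Prod.fst_sum] using hcomb x'
      · simp [Prod.snd_sum, smul_eq_mul, hA]
    rw [hpt] at hmem
    exact hmem
  haveI hne : (nhdsWithin x (coincidenceSet d f)).NeBot :=
    mem_closure_iff_nhdsWithin_neBot.mp hxcl
  have hlef : nhdsWithin x (coincidenceSet d f) ≤ nhdsWithin x (Cube d) :=
    nhdsWithin_mono x hsub
  have hAt : Tendsto A (nhdsWithin x (coincidenceSet d f)) (nhds (phi1 d f x)) := by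
    rw [← hyeq]
    apply tendsto_finset_sum
    intro i _
    apply Tendsto.const_mul
    have h1 : Tendsto (fun x' => tmap x x' ((z i).1)) (nhdsWithin x (coincidenceSet d f))
        (nhdsWithin ((z i).1) (Cube d)) := by
      rw [tendsto_nhdsWithin_iff]
      constructor
      · exact ((tendsto_tmap hxC ((z i).1)).mono_left nhdsWithin_le_nhds)
      · filter_upwards [self_mem_nhdsWithin] with x' hx'
        exact tmap_mem hxC (hsub hx') (hz i).1
    exact Filter.Tendsto.comp (hf _ (hz i).1) h1
  have hft : Tendsto f (nhdsWithin x (coincidenceSet d f)) (nhds (f x)) :=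
    (hf x hxC).mono_left hlef
  have hev : ∀ᶠ x' in nhdsWithin x (coincidenceSet d f), A x' ≤ f x' := by
    filter_upwards [self_mem_nhdsWithin] with x' hx'
    have h := hlow x' (hsub hx')
    rwa [hx'.2] at h
  have hle2 : phi1 d f x ≤ f x := le_of_tendsto_of_tendsto hAt hft hev
  exact ⟨hxC, le_antisymm hle2 (f_le_phi1 hf hxC)⟩

end CoincidenceAux

theorem coincidenceSet_nonempty_closed_spans (d : ℕ) (f : (Fin d → ℝ) → ℝ)
    (hf : ContinuousOn f (Cube d)) :
    (coincidenceSet d f).Nonempty ∧ IsClosed (coincidenceSet d f) ∧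
      ∀ x₀ ∈ Cube d, ∃ (x : Fin (d + 1) → (Fin d → ℝ)) (p : Fin (d + 1) → ℝ),
        (∀ i, 0 ≤ p i) ∧ (∑ i, p i = 1) ∧ (∀ i, x i ∈ coincidenceSet d f) ∧
        x₀ = ∑ i, p i • x i ∧
        phi1 d f x₀ = ∑ i, p i * f (x i) := by
  refine ⟨?_, CoincidenceAux.isClosed_coincidence hf, fun x₀ hx₀ => CoincidenceAux.exists_repr hf hx₀⟩
  obtain ⟨x, p, _, _, hmem, _, _⟩ := CoincidenceAux.exists_repr hf CoincidenceAux.zero_mem_cube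
  exact ⟨x 0, hmem 0⟩
end
end

section
/- There exists a dense Gδ subset G of C([0,1]^d) such that for every f ∈ G and every x₀ in the face F = {x ∈ [0,1]^d : x_d = 0}, the one-sided partial derivative ∂_{d,+}φ₁(x₀) = lim_{t→0+} (φ₁(x₀ + t e_d) − φ₁(x₀))/t equals +∞, where φ₁ is the concave function on top of the convex hull of the graph of f. -/
open Set Metric Filter

noncomputable section

def graphHullC {d : ℕ} (F : C(Cube d, ℝ)) : Set ((Fin d → ℝ) × ℝ) :=
  convexHull ℝ {p : (Fin d → ℝ) × ℝ | ∃ x : Cube d, p = (↑x, F x)}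

def phi1C {d : ℕ} (F : C(Cube d, ℝ)) (x : Fin d → ℝ) : ℝ :=
  sSup {y : ℝ | (x, y) ∈ graphHullC F}

namespace Phi1Aux

variable {d : ℕ}

instance cubeCompact : CompactSpace (Cube d) := by
  unfold Cube; infer_instance

instance cubeNonempty : Nonempty (Cube d) :=
  ⟨⟨0, by constructor <;> intro k <;> simp⟩⟩

lemma mem_cube_iff {x : Fin d → ℝ} : x ∈ Cube d ↔ ∀ k, 0 ≤ x k ∧ x k ≤ 1 := by
  simp only [Cube, Set.mem_Icc, Pi.le_def]
  constructor
  · rintro ⟨h1, h2⟩ k; exact ⟨h1 k, h2 k⟩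
  · intro h; exact ⟨fun k => (h k).1, fun k => (h k).2⟩

lemma sum_pair {ι : Type} (s : Finset ι) (w : ι → ℝ) (a : ι → Fin d → ℝ) (b : ι → ℝ) :
    ∑ i ∈ s, w i • ((a i, b i) : (Fin d → ℝ) × ℝ)
      = (∑ i ∈ s, w i • a i, ∑ i ∈ s, w i * b i) := by
  rw [Prod.ext_iff, Prod.fst_sum, Prod.snd_sum]
  constructor <;> simp

lemma mem_graphHullC_iff {F : C(Cube d, ℝ)} {x : Fin d → ℝ} {y : ℝ} :
    (x, y) ∈ graphHullC F ↔
      ∃ (ι : Type) (s : Finset ι) (w : ι → ℝ) (z : ι → Cube d),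
        (∀ i ∈ s, 0 ≤ w i) ∧ (∑ i ∈ s, w i = 1) ∧
        (∑ i ∈ s, w i • (z i : Fin d → ℝ)) = x ∧ (∑ i ∈ s, w i * F (z i)) = y := by
  constructor
  · intro h
    rw [graphHullC, convexHull_eq] at h
    obtain ⟨ι, s, w, p, hw0, hw1, hps, hc⟩ := h
    have hz' : ∀ i, ∃ zi : Cube d, i ∈ s → p i = (↑zi, F zi) := by
      intro i
      by_cases hi : i ∈ s
      · obtain ⟨xi, hxi⟩ := hps i hi
        exact ⟨xi, fun _ => hxi⟩
      · exact ⟨Classical.arbitrary _, fun h' => absurd h' hi⟩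
    choose z hz using hz'
    rw [Finset.centerMass_eq_of_sum_1 _ _ hw1] at hc
    have hc' : ∑ i ∈ s, w i • (((z i : Fin d → ℝ), F (z i)) : (Fin d → ℝ) × ℝ) = (x, y) := by
      rw [← hc]
      exact Finset.sum_congr rfl fun i hi => by rw [hz i hi]
    rw [sum_pair, Prod.ext_iff] at hc'
    exact ⟨ι, s, w, z, hw0, hw1, hc'.1, hc'.2⟩
  · rintro ⟨ι, s, w, z, hw0, hw1, hx, hy⟩
    have : ((x, y) : (Fin d → ℝ) × ℝ)
        = s.centerMass w (fun i => (((z i : Fin d → ℝ), F (z i)) : (Fin d → ℝ) × ℝ)) := by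
      rw [Finset.centerMass_eq_of_sum_1 _ _ hw1, sum_pair, hx, hy]
    rw [graphHullC, this]
    exact Finset.centerMass_mem_convexHull s hw0 (by rw [hw1]; exact one_pos)
      (fun i _ => ⟨z i, rfl⟩)

lemma graph_mem {F : C(Cube d, ℝ)} {x : Fin d → ℝ} (hx : x ∈ Cube d) :
    (x, F ⟨x, hx⟩) ∈ graphHullC F :=
  subset_convexHull ℝ _ ⟨⟨x, hx⟩, rfl⟩

lemma S_nonempty {F : C(Cube d, ℝ)} {x : Fin d → ℝ} (hx : x ∈ Cube d) :
    {y : ℝ | (x, y) ∈ graphHullC F}.Nonempty :=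
  ⟨F ⟨x, hx⟩, graph_mem hx⟩

lemma snd_bound {F : C(Cube d, ℝ)} {p : (Fin d → ℝ) × ℝ} (hp : p ∈ graphHullC F) :
    |p.2| ≤ ‖F‖ := by
  have hsub : graphHullC F ⊆ (Set.univ : Set (Fin d → ℝ)) ×ˢ Set.Icc (-‖F‖) ‖F‖ := by
    rw [graphHullC]
    apply convexHull_min
    · rintro q ⟨xq, rfl⟩
      refine ⟨trivial, ?_⟩
      rw [Set.mem_Icc, ← abs_le]
      simpa using F.norm_coe_le_norm xq
    · exact (convex_univ).prod (convex_Icc _ _)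
  have := hsub hp
  rw [Set.mem_prod, Set.mem_Icc] at this
  rw [abs_le]
  exact this.2

lemma bddAbove_S {F : C(Cube d, ℝ)} {x : Fin d → ℝ} :
    BddAbove {y : ℝ | (x, y) ∈ graphHullC F} :=
  ⟨‖F‖, fun y hy => (abs_le.mp (snd_bound hy)).2⟩

lemma le_phi1C {F : C(Cube d, ℝ)} {x : Fin d → ℝ} {y : ℝ} (h : (x, y) ∈ graphHullC F) :
    y ≤ phi1C F x :=
  le_csSup bddAbove_S h

lemma phi1C_le {F : C(Cube d, ℝ)} {x : Fin d → ℝ} (hx : x ∈ Cube d) {c : ℝ}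
    (h : ∀ y, (x, y) ∈ graphHullC F → y ≤ c) : phi1C F x ≤ c :=
  csSup_le (S_nonempty hx) h

/-- Lipschitz dependence of `phi1C` on the function. -/
lemma phi1C_le_of_close (F F' : C(Cube d, ℝ)) {x : Fin d → ℝ} (hx : x ∈ Cube d) :
    phi1C F x ≤ phi1C F' x + dist F F' := by
  apply phi1C_le hx
  intro y hy
  rw [mem_graphHullC_iff] at hy
  obtain ⟨ι, s, w, z, hw0, hw1, hxx, hyy⟩ := hy
  have hmem : (x, ∑ i ∈ s, w i * F' (z i)) ∈ graphHullC F' :=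
    mem_graphHullC_iff.mpr ⟨ι, s, w, z, hw0, hw1, hxx, rfl⟩
  have key : y ≤ (∑ i ∈ s, w i * F' (z i)) + dist F F' := by
    rw [← hyy]
    have : ∀ i ∈ s, w i * F (z i) ≤ w i * F' (z i) + w i * dist F F' := by
      intro i hi
      have h1 : F (z i) ≤ F' (z i) + dist F F' := by
        have := ContinuousMap.dist_apply_le_dist (f := F) (g := F') (z i)
        rw [Real.dist_eq] at this
        have := (abs_le.mp this).2
        linarith
      nlinarith [hw0 i hi]
    calc ∑ i ∈ s, w i * F (z i) ≤ ∑ i ∈ s, (w i * F' (z i) + w i * dist F F') :=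
          Finset.sum_le_sum this
      _ = (∑ i ∈ s, w i * F' (z i)) + (∑ i ∈ s, w i) * dist F F' := by
          rw [Finset.sum_add_distrib, Finset.sum_mul]
      _ = (∑ i ∈ s, w i * F' (z i)) + dist F F' := by rw [hw1, one_mul]
  exact key.trans (by linarith [le_phi1C hmem])

lemma mul_csSup_le {S : Set ℝ} (hne : S.Nonempty) {a c : ℝ} (ha : 0 ≤ a)
    (h : ∀ u ∈ S, a * u ≤ c) : a * sSup S ≤ c := by
  rcases eq_or_lt_of_le ha with rfl | ha'
  · obtain ⟨u, hu⟩ := hne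
    simpa using h u hu
  · have hbdd : BddAbove S := ⟨c / a, fun u hu => (le_div_iff₀ ha').mpr (by linarith [h u hu, mul_comm a u])⟩
    have : sSup S ≤ c / a := csSup_le hne fun u hu => (le_div_iff₀ ha').mpr (by rw [mul_comm]; exact h u hu)
    calc a * sSup S ≤ a * (c / a) := by nlinarith
      _ = c := by field_simp

/-- Concavity of `phi1C` on the cube. -/
lemma phi1C_concave (F : C(Cube d, ℝ)) {x y : Fin d → ℝ} (hx : x ∈ Cube d) (hy : y ∈ Cube d)
    {a b : ℝ} (ha : 0 ≤ a) (hb : 0 ≤ b) (hab : a + b = 1) :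
    a * phi1C F x + b * phi1C F y ≤ phi1C F (a • x + b • y) := by
  have key : ∀ u, (x, u) ∈ graphHullC F → ∀ v, (y, v) ∈ graphHullC F →
      a * u + b * v ≤ phi1C F (a • x + b • y) := by
    intro u hu v hv
    apply le_phi1C
    have hconv : Convex ℝ (graphHullC F) := convex_convexHull ℝ _
    have := hconv hu hv ha hb hab
    convert this using 2 <;> simp [Prod.ext_iff, smul_eq_mul]
  have h1 : a * phi1C F x ≤ phi1C F (a • x + b • y) - b * phi1C F y := by
    apply mul_csSup_le (S_nonempty hx) ha
    intro u hu
    have h2 : b * phi1C F y ≤ phi1C F (a • x + b • y) - a * u := by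
      apply mul_csSup_le (S_nonempty hy) hb
      intro v hv
      linarith [key u hu v hv]
    linarith
  linarith

end Phi1Aux

namespace Phi1Aux

variable {d : ℕ}

lemma add_single_mem {j : Fin d} {x : Fin d → ℝ} (hx : x ∈ Cube d) (h0 : x j = 0)
    {t : ℝ} (ht : 0 ≤ t) (ht1 : t ≤ 1) :
    x + t • (Pi.single j 1 : Fin d → ℝ) ∈ Cube d := by
  rw [mem_cube_iff] at hx ⊢
  intro k
  by_cases hk : k = j
  · subst hk
    simp [h0, ht, ht1]
  · simp [Pi.single_apply, hk, hx k]

/-- Key geometric lemma: if `F` gains at least `c` when moving from any face point `z`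
to `z + t e_j`, then so does `phi1C F` from a face point `x₀`. -/
lemma face_shift (F : C(Cube d, ℝ)) {j : Fin d} {x₀ : Fin d → ℝ} (hx₀ : x₀ ∈ Cube d)
    (h0 : x₀ j = 0) {t c : ℝ} (ht : 0 < t) (ht1 : t ≤ 1)
    (key : ∀ z : Cube d, ∀ hz : (z : Fin d → ℝ) j = 0,
      F z + c ≤ F ⟨(z : Fin d → ℝ) + t • (Pi.single j 1 : Fin d → ℝ),
        add_single_mem z.2 hz ht.le ht1⟩) :
    phi1C F x₀ + c ≤ phi1C F (x₀ + t • (Pi.single j 1 : Fin d → ℝ)) := by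
  have main : phi1C F x₀ ≤ phi1C F (x₀ + t • (Pi.single j 1 : Fin d → ℝ)) - c := by
    apply phi1C_le hx₀
    intro y hy
    rw [mem_graphHullC_iff] at hy
    obtain ⟨ι, s, w, z, hw0, hw1, hxx, hyy⟩ := hy
    -- all points with positive weight lie on the face
    have hface : ∀ i ∈ s, w i ≠ 0 → (z i : Fin d → ℝ) j = 0 := by
      have hsum : ∑ i ∈ s, w i * (z i : Fin d → ℝ) j = 0 := by
        have := congrFun hxx j
        simpa [Finset.sum_apply, h0] using this
      have hterm : ∀ i ∈ s, w i * (z i : Fin d → ℝ) j = 0 :=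
        (Finset.sum_eq_zero_iff_of_nonneg (fun i hi =>
          mul_nonneg (hw0 i hi) ((mem_cube_iff.mp (z i).2 j).1))).mp hsum
      intro i hi hwi
      have := hterm i hi
      rcases mul_eq_zero.mp this with h | h
      · exact absurd h hwi
      · exact h
    classical
    set z' : ι → Cube d := fun i =>
      if h : (z i : Fin d → ℝ) j = 0 then z i else ⟨x₀, hx₀⟩ with hz'def
    have hz'face : ∀ i, (z' i : Fin d → ℝ) j = 0 := by
      intro i
      rw [hz'def]
      by_cases h : (z i : Fin d → ℝ) j = 0 <;> simp [h, h0]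
    have hz'eq : ∀ i ∈ s, w i ≠ 0 → z' i = z i := by
      intro i hi hwi
      rw [hz'def]
      simp [hface i hi hwi]
    set p : ι → Cube d := fun i =>
      ⟨(z' i : Fin d → ℝ) + t • (Pi.single j 1 : Fin d → ℝ),
        add_single_mem (z' i).2 (hz'face i) ht.le ht1⟩ with hpdef
    have hsumx : ∑ i ∈ s, w i • (p i : Fin d → ℝ)
        = x₀ + t • (Pi.single j 1 : Fin d → ℝ) := by
      have e1 : ∀ i ∈ s, w i • (p i : Fin d → ℝ)
          = w i • (z' i : Fin d → ℝ) + w i • (t • (Pi.single j 1 : Fin d → ℝ)) := by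
        intro i _
        rw [hpdef]
        simp [smul_add]
      rw [Finset.sum_congr rfl e1, Finset.sum_add_distrib]
      have e2 : ∑ i ∈ s, w i • (z' i : Fin d → ℝ) = x₀ := by
        rw [← hxx]
        apply Finset.sum_congr rfl
        intro i hi
        by_cases hwi : w i = 0
        · simp [hwi]
        · rw [hz'eq i hi hwi]
      have e3 : ∑ i ∈ s, w i • (t • (Pi.single j 1 : Fin d → ℝ))
          = t • (Pi.single j 1 : Fin d → ℝ) := by
        rw [← Finset.sum_smul, hw1, one_smul]
      rw [e2, e3]
    have hmem : ((x₀ + t • (Pi.single j 1 : Fin d → ℝ)), ∑ i ∈ s, w i * F (p i))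
        ∈ graphHullC F :=
      mem_graphHullC_iff.mpr ⟨ι, s, w, p, hw0, hw1, hsumx, rfl⟩
    have hval : y + c ≤ ∑ i ∈ s, w i * F (p i) := by
      have e4 : y + c = ∑ i ∈ s, (w i * F (z' i) + w i * c) := by
        rw [Finset.sum_add_distrib, ← Finset.sum_mul, hw1, one_mul, ← hyy]
        congr 1
        apply Finset.sum_congr rfl
        intro i hi
        by_cases hwi : w i = 0
        · simp [hwi]
        · rw [hz'eq i hi hwi]
      rw [e4]
      apply Finset.sum_le_sum
      intro i hi
      have hk := key (z' i) (hz'face i)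
      have : w i * (F (z' i) + c) ≤ w i * F (p i) :=
        mul_le_mul_of_nonneg_left hk (hw0 i hi)
      linarith [this]
    linarith [le_phi1C hmem]
  linarith

end Phi1Aux

namespace Phi1Aux

variable {d : ℕ}

/-- Monotonicity of difference quotients of the concave function `phi1C` along the
inward direction at a face point. -/
lemma slope_mono (F : C(Cube d, ℝ)) {j : Fin d} {x₀ : Fin d → ℝ} (hx₀ : x₀ ∈ Cube d)
    (h0 : x₀ j = 0) {s t : ℝ} (hs : 0 < s) (hst : s ≤ t) (ht1 : t ≤ 1) :
    (phi1C F (x₀ + t • (Pi.single j 1 : Fin d → ℝ)) - phi1C F x₀) / t ≤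
      (phi1C F (x₀ + s • (Pi.single j 1 : Fin d → ℝ)) - phi1C F x₀) / s := by
  have ht0 : 0 < t := hs.trans_le hst
  have ha : (0:ℝ) ≤ 1 - s / t := by
    rw [sub_nonneg, div_le_one ht0]
    exact hst
  have hb : (0:ℝ) ≤ s / t := by positivity
  have hab : (1 - s / t) + s / t = 1 := by ring
  have hcomb : (1 - s / t) • x₀ + (s / t) • (x₀ + t • (Pi.single j 1 : Fin d → ℝ))
      = x₀ + s • (Pi.single j 1 : Fin d → ℝ) := by
    rw [smul_add, smul_smul, ← add_assoc, ← add_smul, hab, one_smul,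
      div_mul_cancel₀ _ ht0.ne']
  have hconv := phi1C_concave F hx₀ (add_single_mem hx₀ h0 ht0.le ht1) ha hb hab
  rw [hcomb] at hconv
  set A := phi1C F x₀
  set B := phi1C F (x₀ + t • (Pi.single j 1 : Fin d → ℝ))
  set C := phi1C F (x₀ + s • (Pi.single j 1 : Fin d → ℝ))
  have hexp : ((1 - s / t) * A + (s / t) * B) * t = (t - s) * A + s * B := by
    field_simp
  rw [div_le_div_iff₀ ht0 hs]
  nlinarith [mul_le_mul_of_nonneg_right hconv ht0.le]

def projC (j : Fin d) (x : Cube d) : Cube d :=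
  ⟨fun k => if k = j then 0 else (x : Fin d → ℝ) k, by
    rw [mem_cube_iff]
    intro k
    by_cases hk : k = j
    · simp [hk]
    · simpa [hk] using mem_cube_iff.mp x.2 k⟩

lemma projC_continuous (j : Fin d) : Continuous (projC (d := d) j) := by
  apply Continuous.subtype_mk
  apply continuous_pi
  intro k
  by_cases hk : k = j
  · simpa [hk] using continuous_const
  · simpa [hk, Function.comp_def] using (continuous_apply k).comp continuous_subtype_val

lemma dist_projC (j : Fin d) (x : Cube d) : dist x (projC j x) ≤ (x : Fin d → ℝ) j := by
  have hxj : 0 ≤ (x : Fin d → ℝ) j := (mem_cube_iff.mp x.2 j).1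
  rw [Subtype.dist_eq]
  rw [dist_pi_le_iff hxj]
  intro k
  by_cases hk : k = j
  · subst hk
    simp [projC, Real.dist_eq, abs_of_nonneg hxj]
  · simp [projC, hk, hxj]

lemma projC_of_face (j : Fin d) (z : Cube d) (hz : (z : Fin d → ℝ) j = 0) :
    projC j z = z := by
  apply Subtype.ext
  funext k
  by_cases hk : k = j
  · subst hk; simp [projC, hz]
  · simp [projC, hk]

lemma projC_shift (j : Fin d) (z : Cube d) (hz : (z : Fin d → ℝ) j = 0) {t : ℝ}
    (mem : (z : Fin d → ℝ) + t • (Pi.single j 1 : Fin d → ℝ) ∈ Cube d) :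
    projC j ⟨(z : Fin d → ℝ) + t • (Pi.single j 1 : Fin d → ℝ), mem⟩ = z := by
  apply Subtype.ext
  funext k
  by_cases hk : k = j
  · subst hk; simp [projC, hz]
  · simp [projC, hk, Pi.single_apply]

end Phi1Aux

namespace Phi1Aux

variable {d : ℕ}

def Uset (d : ℕ) (j : Fin d) (n : ℕ) : Set C(Cube d, ℝ) :=
  {F | ∃ t : ℝ, 0 < t ∧ t ≤ 1 ∧ ∃ δ : ℝ, 0 < δ ∧ ∀ x₀ ∈ Cube d, x₀ j = 0 →
    phi1C F x₀ + ((n : ℝ) + 1) * t + δ ≤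
      phi1C F (x₀ + t • (Pi.single j 1 : Fin d → ℝ))}

lemma Uset_open (j : Fin d) (n : ℕ) : IsOpen (Uset d j n) := by
  rw [Metric.isOpen_iff]
  rintro F ⟨t, ht0, ht1, δ, hδ, hineq⟩
  refine ⟨δ / 4, by linarith, ?_⟩
  intro F' hF'
  rw [mem_ball] at hF'
  refine ⟨t, ht0, ht1, δ / 2, by linarith, ?_⟩
  intro x₀ hx₀ h0
  have hc1 := phi1C_le_of_close F' F hx₀
  have hc2 := phi1C_le_of_close F F' (add_single_mem hx₀ h0 ht0.le ht1)
  have h3 := hineq x₀ hx₀ h0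
  have hd : dist F F' = dist F' F := dist_comm _ _
  linarith

lemma Uset_dense (j : Fin d) (n : ℕ) : Dense (Uset d j n) := by
  rw [Metric.dense_iff]
  intro F r hr
  -- uniform continuity of F
  have ucf : UniformContinuous F := CompactSpace.uniformContinuous_of_continuous F.continuous
  rw [Metric.uniformContinuous_iff] at ucf
  obtain ⟨δ₀, hδ₀, hmod⟩ := ucf (r / 4) (by linarith)
  set t₁ : ℝ := δ₀ / 2 with ht₁def
  have ht₁ : 0 < t₁ := by positivity
  set ε : ℝ := r / 4 with hεdef
  have hε : 0 < ε := by positivity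
  set K : ℝ := (2 * ‖F‖ + ε) / t₁ with hKdef
  have hK0 : 0 ≤ K := by positivity
  have c1 : Continuous fun x : Cube d => (x : Fin d → ℝ) j :=
    (continuous_apply j).comp continuous_subtype_val
  set Gp : C(Cube d, ℝ) := ⟨fun x => max (F x)
      (F (projC j x) + ε * Real.sqrt ((x : Fin d → ℝ) j) - K * (x : Fin d → ℝ) j),
    F.continuous.max
      (((F.continuous.comp (projC_continuous j)).add
        (continuous_const.mul (Real.continuous_sqrt.comp c1))).sub
        (continuous_const.mul c1))⟩ with hGp
  -- Gp agrees with F on the face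
  have hGface : ∀ z : Cube d, (z : Fin d → ℝ) j = 0 → Gp z = F z := by
    intro z hz
    simp only [hGp, ContinuousMap.coe_mk]
    rw [projC_of_face j z hz, hz, Real.sqrt_zero]
    simp
  -- Gp gains at least ε√t - Kt on moving inward from the face
  have hGshift : ∀ (z : Cube d) (hz : (z : Fin d → ℝ) j = 0) (t : ℝ) (ht0 : 0 ≤ t)
      (ht1 : t ≤ 1),
      F z + ε * Real.sqrt t - K * t ≤
        Gp ⟨(z : Fin d → ℝ) + t • (Pi.single j 1 : Fin d → ℝ),
          add_single_mem z.2 hz ht0 ht1⟩ := by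
    intro z hz t ht0 ht1
    have e1 : projC j ⟨(z : Fin d → ℝ) + t • (Pi.single j 1 : Fin d → ℝ),
        add_single_mem z.2 hz ht0 ht1⟩ = z := projC_shift j z hz _
    simp only [hGp, ContinuousMap.coe_mk]
    rw [e1]
    refine le_trans (le_of_eq ?_) (le_max_right _ _)
    have e2 : ((z : Fin d → ℝ) + t • (Pi.single j 1 : Fin d → ℝ)) j = t := by
      simp [hz]
    congr 2 <;> rw [e2]
  -- distance bound
  have hdist : dist Gp F ≤ r / 2 := by
    rw [ContinuousMap.dist_le (by linarith)]
    intro x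
    have hx01 := mem_cube_iff.mp x.2 j
    have hsqrt1 : Real.sqrt ((x : Fin d → ℝ) j) ≤ 1 := Real.sqrt_le_one.mpr hx01.2
    have h2 : ε * Real.sqrt ((x : Fin d → ℝ) j) ≤ ε := by nlinarith
    have hub : F (projC j x) + ε * Real.sqrt ((x : Fin d → ℝ) j) - K * (x : Fin d → ℝ) j
        ≤ F x + r / 2 := by
      by_cases hcase : (x : Fin d → ℝ) j ≤ t₁
      · have hd : dist (F (projC j x)) (F x) < r / 4 := by
          apply hmod
          calc dist (projC j x) x = dist x (projC j x) := dist_comm _ _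
            _ ≤ (x : Fin d → ℝ) j := dist_projC j x
            _ ≤ t₁ := hcase
            _ < δ₀ := by rw [ht₁def]; linarith
        rw [Real.dist_eq, abs_sub_lt_iff] at hd
        have h3 : 0 ≤ K * (x : Fin d → ℝ) j := mul_nonneg hK0 hx01.1
        have h1 := hd.1
        rw [hεdef] at h2 ⊢
        linarith
      · push_neg at hcase
        have hKt : K * t₁ = 2 * ‖F‖ + ε := div_mul_cancel₀ _ ht₁.ne'
        have h4 : 2 * ‖F‖ + ε ≤ K * (x : Fin d → ℝ) j := by nlinarith
        have h5 : F (projC j x) ≤ ‖F‖ := by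
          have := F.norm_coe_le_norm (projC j x)
          have := (abs_le.mp (by simpa using this)).2
          linarith
        have h6 : -‖F‖ ≤ F x := by
          have := F.norm_coe_le_norm x
          have := (abs_le.mp (by simpa using this)).1
          linarith
        linarith
    have hlb : F x ≤ Gp x := by
      simp only [hGp, ContinuousMap.coe_mk]
      exact le_max_left _ _
    have hub2 : Gp x ≤ F x + r / 2 := by
      simp only [hGp, ContinuousMap.coe_mk]
      exact max_le (by linarith) hub
    rw [Real.dist_eq, abs_of_nonneg (by linarith)]
    linarith
  -- choice of t
  have hnK : (0 : ℝ) < (n : ℝ) + 2 + K := by positivity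
  set t : ℝ := min 1 ((ε / ((n : ℝ) + 2 + K)) ^ 2) with htdef
  have ht0 : 0 < t := lt_min one_pos (by positivity)
  have ht1 : t ≤ 1 := min_le_left _ _
  have hsq : Real.sqrt t ≤ ε / ((n : ℝ) + 2 + K) := by
    calc Real.sqrt t ≤ Real.sqrt ((ε / ((n : ℝ) + 2 + K)) ^ 2) :=
          Real.sqrt_le_sqrt (min_le_right _ _)
      _ = ε / ((n : ℝ) + 2 + K) := Real.sqrt_sq (by positivity)
  have hgain : ((n : ℝ) + 1) * t + t ≤ ε * Real.sqrt t - K * t := by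
    have h8 : ((n : ℝ) + 2 + K) * Real.sqrt t ≤ ε := by
      have := mul_le_mul_of_nonneg_left hsq hnK.le
      rwa [mul_div_cancel₀ _ hnK.ne'] at this
    have h9 := mul_le_mul_of_nonneg_right h8 (Real.sqrt_nonneg t)
    rw [mul_assoc, Real.mul_self_sqrt ht0.le] at h9
    nlinarith [h9]
  -- membership in Uset
  have hmem : Gp ∈ Uset d j n := by
    refine ⟨t, ht0, ht1, t, ht0, ?_⟩
    intro x₀ hx₀ h0
    have hkey : ∀ z : Cube d, ∀ hz : (z : Fin d → ℝ) j = 0,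
        Gp z + (((n : ℝ) + 1) * t + t) ≤
          Gp ⟨(z : Fin d → ℝ) + t • (Pi.single j 1 : Fin d → ℝ),
            add_single_mem z.2 hz ht0.le ht1⟩ := by
      intro z hz
      rw [hGface z hz]
      refine le_trans ?_ (hGshift z hz t ht0.le ht1)
      linarith
    have := face_shift Gp hx₀ h0 ht0 ht1 hkey
    linarith
  exact ⟨Gp, Set.mem_inter (mem_ball.mpr (lt_of_le_of_lt hdist (by linarith))) hmem⟩

end Phi1Aux

open Phi1Aux in
/-- Part of Lemma 2.4: for generic `f`, at every point of the face `{x_j = 0}` the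
one-sided partial derivative of `φ₁` in the `j`-th inward direction is `+∞`. -/
theorem generic_phi1_infinite_derivative_on_face (d : ℕ) (j : Fin d) :
    ∃ G : Set C(Cube d, ℝ), Dense G ∧ IsGδ G ∧
      ∀ F ∈ G, ∀ x₀ ∈ Cube d, x₀ j = 0 →
        Tendsto
          (fun t : ℝ =>
            (phi1C F (x₀ + t • (Pi.single j 1 : Fin d → ℝ)) - phi1C F x₀) / t)
          (nhdsWithin 0 (Set.Ioi 0)) atTop := by
  refine ⟨⋂ n, Uset d j n, dense_iInter_of_isOpen (fun n => Uset_open j n)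
    (fun n => Uset_dense j n), IsGδ.iInter (fun n => (Uset_open j n).isGδ), ?_⟩
  intro F hF x₀ hx₀ h0
  rw [Filter.tendsto_atTop]
  intro b
  obtain ⟨n, hnb⟩ := exists_nat_ge b
  have hFn : F ∈ Uset d j n := Set.mem_iInter.mp hF n
  obtain ⟨t, ht0, ht1, δ, hδ, hineq⟩ := hFn
  filter_upwards [Ioc_mem_nhdsGT_of_mem ⟨le_rfl, ht0⟩] with s hs
  obtain ⟨hs0, hst⟩ := hs
  have hslope := slope_mono F hx₀ h0 hs0 hst ht1
  have hA : b ≤ (phi1C F (x₀ + t • (Pi.single j 1 : Fin d → ℝ)) - phi1C F x₀) / t := by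
    rw [le_div_iff₀ ht0]
    have h3 := hineq x₀ hx₀ h0
    have h4 : b * t ≤ ((n : ℝ) + 1) * t := by nlinarith
    linarith
  linarith
end
end

section
/- There exists a dense Gδ subset G of C([0,1]^d) such that for every f ∈ G, the coincidence set E₁ = {x ∈ [0,1]^d : f(x) = φ₁(x)} has Hausdorff dimension 0, where φ₁ is the concave function on top of the convex hull of the graph of f. -/
open Set Metric Filter
open scoped ENNReal NNReal
open MeasureTheory

noncomputable section

variable {d : ℕ}

instance : CompactSpace (Cube d) := isCompact_iff_compactSpace.mp isCompact_Icc

instance : Nonempty (Cube d) := ⟨⟨0, by simp [Cube]⟩⟩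

lemma bddAbove_section (F : C(Cube d, ℝ)) (x : Fin d → ℝ) :
    BddAbove {y : ℝ | (x, y) ∈ graphHullC F} := by
  obtain ⟨M, hM⟩ := (isCompact_range F.continuous).bddAbove
  refine ⟨M, fun y hy => ?_⟩
  have : graphHullC F ⊆ {p : (Fin d → ℝ) × ℝ | p.2 ≤ M} := by
    apply convexHull_min
    · rintro p ⟨z, rfl⟩
      exact hM ⟨z, rfl⟩
    · exact convex_halfSpace_le (LinearMap.isLinear (LinearMap.snd ℝ _ ℝ)) M
  exact this hy

lemma le_phi1 {F : C(Cube d, ℝ)} {x : Fin d → ℝ} {y : ℝ} (h : (x, y) ∈ graphHullC F) :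
    y ≤ phi1C F x :=
  le_csSup (bddAbove_section F x) h

lemma self_le_phi1 (F : C(Cube d, ℝ)) (x : Cube d) : F x ≤ phi1C F ↑x :=
  le_phi1 (subset_convexHull ℝ _ ⟨x, rfl⟩)

def gridF (d m : ℕ) : Finset (Fin d → ℝ) :=
  Finset.image (fun k : Fin d → Fin (m+1) => fun j => (k j : ℝ)/m) Finset.univ

lemma mem_gridF {m : ℕ} {v : Fin d → ℝ} (h : ∀ j, ∃ k : ℕ, k ≤ m ∧ v j = k/m) :
    v ∈ gridF d m := by
  choose κ hκ hv using h
  refine Finset.mem_image.mpr ⟨fun j => ⟨κ j, Nat.lt_succ_of_le (hκ j)⟩, Finset.mem_univ _, ?_⟩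
  funext j
  simp [hv j]

lemma exists_corner_combination (m : ℕ) (hm : 1 ≤ m) {x : Fin d → ℝ} (hx : x ∈ Cube d) :
    ∃ (ι : Type) (_ : Fintype ι) (w : ι → ℝ) (p : ι → Cube d),
      (∀ i, 0 ≤ w i) ∧ (∑ i, w i = 1) ∧ (∑ i, w i • ((p i : Fin d → ℝ)) = x) ∧
      (∀ i, (p i : Fin d → ℝ) ∈ gridF d m) ∧ (∀ i, dist ((p i : Fin d → ℝ)) x ≤ 1/m) := by
  have hx0 : ∀ j, 0 ≤ x j := fun j => hx.1 j
  have hx1 : ∀ j, x j ≤ 1 := fun j => hx.2 j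
  have hm0 : (0:ℝ) < m := by exact_mod_cast hm
  set a : Fin d → ℝ := fun j => ((min ⌊x j * m⌋₊ (m-1) : ℕ) : ℝ)/m with ha
  set b : Fin d → ℝ := fun j => (((min ⌊x j * m⌋₊ (m-1) + 1 : ℕ)) : ℝ)/m with hb
  have hab : ∀ j, b j - a j = 1/m := by
    intro j; rw [ha, hb]; push_cast; ring
  have hax : ∀ j, a j ≤ x j := by
    intro j
    rw [ha]
    have h1 : ((min ⌊x j * m⌋₊ (m-1) : ℕ) : ℝ) ≤ (⌊x j * m⌋₊ : ℝ) := by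
      exact_mod_cast Nat.min_le_left _ _
    have h2 : (⌊x j * m⌋₊ : ℝ) ≤ x j * m := Nat.floor_le (mul_nonneg (hx0 j) hm0.le)
    rw [div_le_iff₀ hm0]
    exact h1.trans h2
  have hxb : ∀ j, x j ≤ b j := by
    intro j
    rw [hb, le_div_iff₀ hm0]
    rcases le_or_gt ⌊x j * m⌋₊ (m-1) with h | h
    · rw [min_eq_left h]
      push_cast
      exact (Nat.lt_floor_add_one (x j * m)).le
    · rw [min_eq_right h.le]
      have h' : (m - 1 + 1 : ℕ) = m := Nat.succ_pred_eq_of_pos hm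
      rw [h']
      nlinarith [hx1 j]
  have hb1 : ∀ j, b j ≤ 1 := by
    intro j
    rw [hb, div_le_one hm0]
    have : min ⌊x j * m⌋₊ (m-1) + 1 ≤ m := by
      have := Nat.min_le_right ⌊x j * m⌋₊ (m-1); omega
    exact_mod_cast this
  have ha0 : ∀ j, 0 ≤ a j := fun j => by rw [ha]; positivity
  have hxhull : x ∈ convexHull ℝ (Set.pi univ (fun j => ({a j, b j} : Set ℝ))) := by
    rw [convexHull_pi]
    intro j _
    show x j ∈ convexHull ℝ ({a j, b j} : Set ℝ)
    rw [convexHull_pair, segment_eq_Icc ((hax j).trans (hxb j))]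
    exact ⟨hax j, hxb j⟩
  rw [mem_convexHull_iff_exists_fintype] at hxhull
  obtain ⟨ι, _inst, w, z, hw0, hw1, hz, hzx⟩ := hxhull
  have hz' : ∀ i j, z i j = a j ∨ z i j = b j := by
    intro i j
    have := hz i j (mem_univ j)
    simpa [Set.mem_insert_iff, Set.mem_singleton_iff] using this
  have hzc : ∀ i, z i ∈ Cube d := by
    intro i
    constructor <;> intro j <;> simp only [Pi.zero_apply, Pi.one_apply] <;>
      rcases hz' i j with h | h <;> rw [h]
    · exact ha0 j
    · linarith [ha0 j, hab j, one_div_pos.mpr hm0]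
    · exact (hax j).trans (hx1 j)
    · exact hb1 j
  refine ⟨ι, _inst, w, fun i => ⟨z i, hzc i⟩, hw0, hw1, by simpa using hzx, ?_, ?_⟩
  · intro i
    apply mem_gridF
    intro j
    have hmin : min ⌊x j * m⌋₊ (m-1) ≤ m - 1 := Nat.min_le_right _ _
    rcases hz' i j with h | h
    · exact ⟨min ⌊x j * m⌋₊ (m-1), by omega, by rw [ha] at h; exact_mod_cast h⟩
    · exact ⟨min ⌊x j * m⌋₊ (m-1) + 1, by omega, by rw [hb] at h; exact_mod_cast h⟩
  · intro i
    show dist (z i) x ≤ 1/m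
    rw [dist_pi_le_iff (by positivity)]
    intro j
    rw [Real.dist_eq, abs_le]
    rcases hz' i j with h | h <;> rw [h] <;> constructor <;>
      linarith [hab j, hax j, hxb j, one_div_pos.mpr hm0]

lemma comb_mem_hull (F : C(Cube d, ℝ)) {ι : Type} [Fintype ι] (w : ι → ℝ) (p : ι → Cube d)
    (h0 : ∀ i, 0 ≤ w i) (h1 : ∑ i, w i = 1) :
    ((∑ i, w i • ((p i : Fin d → ℝ))), (∑ i, w i * F (p i))) ∈ graphHullC F := by
  have hm := mem_convexHull_of_exists_fintype (s := {q : (Fin d → ℝ) × ℝ | ∃ x : Cube d, q = (↑x, F x)})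
      w (fun i => (((p i : Fin d → ℝ), F (p i)) : (Fin d → ℝ) × ℝ))
      h0 h1 (fun i => ⟨p i, rfl⟩) rfl
  have : (∑ i, w i • ((((p i : Fin d → ℝ)), F (p i)) : (Fin d → ℝ) × ℝ))
      = ((∑ i, w i • ((p i : Fin d → ℝ))), (∑ i, w i * F (p i))) := by
    simp [Prod.ext_iff, Prod.fst_sum, Prod.snd_sum, Prod.smul_mk, smul_eq_mul]
  rw [this] at hm
  exact hm

lemma sum_le_phi1 (F : C(Cube d, ℝ)) {ι : Type} [Fintype ι] (w : ι → ℝ) (p : ι → Cube d)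
    (h0 : ∀ i, 0 ≤ w i) (h1 : ∑ i, w i = 1) :
    ∑ i, w i * F (p i) ≤ phi1C F (∑ i, w i • ((p i : Fin d → ℝ))) :=
  le_phi1 (comb_mem_hull F w p h0 h1)

/-- Lipschitz dependence of phi1 on F. -/
lemma phi1_lip (F F' : C(Cube d, ℝ)) {x : Fin d → ℝ} (hx : x ∈ Cube d) {c : ℝ}
    (hc : ∀ z : Cube d, F z ≤ F' z + c) : phi1C F x ≤ phi1C F' x + c := by
  have hne : (F ⟨x, hx⟩) ∈ {y : ℝ | (x, y) ∈ graphHullC F} :=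
    subset_convexHull ℝ _ ⟨⟨x, hx⟩, rfl⟩
  refine csSup_le ⟨_, hne⟩ fun y hy => ?_
  simp only [mem_setOf_eq] at hy
  unfold graphHullC at hy
  rw [mem_convexHull_iff_exists_fintype] at hy
  obtain ⟨ι, _inst, w, z, hw0, hw1, hz, hzx⟩ := hy
  choose p hp using hz
  have hfst : ∑ i, w i • ((p i : Fin d → ℝ)) = x := by
    have := congrArg Prod.fst hzx
    rw [Prod.fst_sum] at this
    simpa [fun i => congrArg Prod.fst (hp i)] using this
  have hsnd : ∑ i, w i * F (p i) = y := by
    have := congrArg Prod.snd hzx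
    rw [Prod.snd_sum] at this
    simpa [fun i => congrArg Prod.snd (hp i), smul_eq_mul] using this
  have key : y ≤ (∑ i, w i * F' (p i)) + c := by
    rw [← hsnd]
    have : ∑ i, w i * F (p i) ≤ ∑ i, w i * (F' (p i) + c) := by
      apply Finset.sum_le_sum
      exact fun i _ => mul_le_mul_of_nonneg_left (hc (p i)) (hw0 i)
    calc ∑ i, w i * F (p i) ≤ ∑ i, w i * (F' (p i) + c) := this
      _ = (∑ i, w i * F' (p i)) + c := by
          simp [mul_add, Finset.sum_add_distrib, ← Finset.sum_mul, hw1]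
  refine key.trans (add_le_add_left ?_ c)
  have := sum_le_phi1 F' w p hw0 hw1
  rwa [hfst] at this

def UU (d n : ℕ) : Set C(Cube d, ℝ) :=
  {F | ∃ t : Finset (Fin d → ℝ), ∃ r δ : ℝ, 0 < r ∧ r < 1/(n+1) ∧
    (t.card : ℝ) * r ^ ((1:ℝ)/(n+1)) < 1/(n+1) ∧ 0 < δ ∧
    ∀ x : Cube d, (∀ p ∈ t, r ≤ dist (x : Fin d → ℝ) p) → F x + δ ≤ phi1C F ↑x}

lemma isOpen_UU (n : ℕ) : IsOpen (UU d n) := by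
  rw [Metric.isOpen_iff]
  rintro F ⟨t, r, δ, hr0, hr1, hcard, hδ, hgap⟩
  refine ⟨δ/3, by linarith, ?_⟩
  intro F₁ hF₁
  rw [mem_ball] at hF₁
  refine ⟨t, r, δ/3, hr0, hr1, hcard, by linarith, ?_⟩
  intro x hxt
  have h3 := hgap x hxt
  have hd : dist F F₁ < δ/3 := by rwa [dist_comm] at hF₁
  have h := ContinuousMap.dist_apply_le_dist (f := F₁) (g := F) x
  rw [Real.dist_eq, dist_comm] at h
  have h1 := (abs_sub_le_iff.mp h).1
  have h2 : phi1C F ↑x ≤ phi1C F₁ ↑x + dist F F₁ := by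
    apply phi1_lip F F₁ x.2
    intro z
    have := ContinuousMap.dist_apply_le_dist (f := F) (g := F₁) z
    have := abs_sub_le_iff.mp ((Real.dist_eq (F z) (F₁ z)) ▸ this)
    linarith [this.1]
  linarith

set_option maxHeartbeats 1000000 in
lemma dense_UU (n : ℕ) : Dense (UU d n) := by
  rw [Metric.dense_iff]
  intro F ε hε
  -- uniform continuity modulus
  have hu : UniformContinuous F := CompactSpace.uniformContinuous_of_continuous F.continuous
  obtain ⟨δ₀, hδ₀, hmod⟩ := Metric.uniformContinuous_iff.mp hu (ε/4) (by positivity)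
  obtain ⟨m₀, hm₀⟩ := exists_nat_one_div_lt hδ₀
  set m := m₀ + 1 with hmdef
  have hm : 1 ≤ m := Nat.le_add_left 1 m₀
  have hmδ : (1:ℝ)/m < δ₀ := by exact_mod_cast hm₀
  set P := gridF d m with hP
  have hPne : P.Nonempty := Finset.image_nonempty.mpr Finset.univ_nonempty
  set N := P.card with hN
  -- choose radius r
  set x0 : ℝ := (1/(n+1))/(2*(N+1)) with hx0def
  have hx0 : 0 < x0 := by positivity
  set r : ℝ := min (1/(2*(n+1))) (x0^(n+1)) with hrdef
  have hr0 : 0 < r := lt_min (by positivity) (by positivity)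
  have hr1 : r < 1/(n+1) := by
    calc r ≤ 1/(2*(n+1)) := min_le_left _ _
      _ < 1/(n+1) := by
        apply div_lt_div_of_pos_left one_pos (by positivity)
        nlinarith [Nat.cast_nonneg (α := ℝ) n]
  have hrpow : r ^ ((1:ℝ)/(n+1)) ≤ x0 := by
    have h1 : r ^ ((1:ℝ)/(n+1)) ≤ (x0^(n+1)) ^ ((1:ℝ)/(n+1)) :=
      Real.rpow_le_rpow hr0.le (min_le_right _ _) (by positivity)
    have h2 : (x0^(n+1)) ^ ((1:ℝ)/(n+1)) = x0 := by
      rw [← Real.rpow_natCast x0 (n+1), ← Real.rpow_mul hx0.le]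
      rw [show ((n+1:ℕ):ℝ) * ((1:ℝ)/((n:ℝ)+1)) = 1 by push_cast; field_simp]
      exact Real.rpow_one x0
    exact le_of_le_of_eq h1 h2
  have hcard : (N : ℝ) * r ^ ((1:ℝ)/(n+1)) < 1/(n+1) := by
    have : (N:ℝ) * x0 < 1/(n+1) := by
      have hlt : (N:ℝ) / (2*(N+1)) < 1 := by
        rw [div_lt_one (by positivity)]
        nlinarith [Nat.cast_nonneg (α := ℝ) N]
      have h1n : (0:ℝ) < 1/(n+1) := by positivity
      calc (N:ℝ) * x0 = ((N:ℝ)/(2*(N+1))) * (1/(n+1)) := by rw [hx0def]; ring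
        _ < 1 * (1/(n+1)) := by exact mul_lt_mul_of_pos_right hlt h1n
        _ = 1/(n+1) := one_mul _
    calc (N : ℝ) * r ^ ((1:ℝ)/(n+1)) ≤ (N:ℝ) * x0 :=
          mul_le_mul_of_nonneg_left hrpow (Nat.cast_nonneg N)
      _ < 1/(n+1) := this
  -- the bump function
  set Λ : (Fin d → ℝ) → ℝ := fun v => max 0 (1 - infDist v ↑P / r) with hΛdef
  have hΛcont : Continuous Λ :=
    continuous_const.max (continuous_const.sub ((continuous_infDist_pt (↑P : Set (Fin d → ℝ))).div_const r))
  have hΛ0 : ∀ v, 0 ≤ Λ v := fun v => le_max_left _ _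
  have hΛ1 : ∀ v, Λ v ≤ 1 := by
    intro v
    apply max_le zero_le_one
    have h1 : 0 ≤ infDist v ↑P := infDist_nonneg
    have : 0 ≤ infDist v ↑P / r := div_nonneg h1 hr0.le
    linarith
  have hΛP : ∀ p ∈ P, Λ p = 1 := by
    intro p hp
    have : infDist p ↑P = 0 := infDist_zero_of_mem (by exact_mod_cast hp)
    rw [hΛdef]
    simp [this]
  have hΛout : ∀ v, (∀ p ∈ P, r ≤ dist v p) → Λ v = 0 := by
    intro v hv
    have hge : r ≤ infDist v ↑P := by
      by_contra hcon
      push_neg at hcon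
      obtain ⟨p, hp, hdp⟩ := (infDist_lt_iff (by exact_mod_cast hPne)).mp hcon
      exact absurd hdp (not_lt.mpr (hv p (by exact_mod_cast hp)))
    have : (1:ℝ) - infDist v ↑P / r ≤ 0 := by
      rw [sub_nonpos, le_div_iff₀ hr0]
      linarith
    rw [hΛdef]
    simp [max_eq_left this]
  -- the perturbed function
  obtain ⟨F', hF'app⟩ : ∃ F' : C(Cube d, ℝ), ∀ z : Cube d, F' z = F z - ε/2 + ε * Λ ↑z :=
    ⟨⟨fun z => F z - ε/2 + ε * Λ ↑z,
      (F.continuous.sub continuous_const).add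
        (continuous_const.mul (hΛcont.comp continuous_subtype_val))⟩, fun z => rfl⟩
  have hdist : dist F' F ≤ ε/2 := by
    rw [ContinuousMap.dist_le (by positivity)]
    intro z
    rw [hF'app, Real.dist_eq, abs_le]
    constructor <;> nlinarith [hΛ0 (↑z : Fin d → ℝ), hΛ1 (↑z : Fin d → ℝ)]
  refine ⟨F', ?_, ?_⟩
  · rw [mem_ball]
    calc dist F' F ≤ ε/2 := hdist
      _ < ε := by linarith
  · refine ⟨P, r, ε/2, hr0, hr1, hcard, by positivity, ?_⟩
    intro x hxt
    -- outside the balls, F' = F - ε/2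
    have hΛx : Λ ↑x = 0 := hΛout ↑x hxt
    have hF'x : F' x = F x - ε/2 := by rw [hF'app, hΛx]; ring
    -- corner combination
    obtain ⟨ι, _inst, w, p, hw0, hw1, hsum, hgrid, hdistp⟩ := exists_corner_combination m hm x.2
    have hkey : ∑ i, w i * F' (p i) ≤ phi1C F' ↑x := by
      have := sum_le_phi1 F' w p hw0 hw1
      rwa [hsum] at this
    have hval : ∀ i, F x + ε/4 ≤ F' (p i) := by
      intro i
      have h1 : Λ ↑(p i) = 1 := hΛP _ (hgrid i)
      have h2 : dist (p i) x < δ₀ := by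
        rw [Subtype.dist_eq]
        exact lt_of_le_of_lt (hdistp i) hmδ
      have h3 : dist (F (p i)) (F x) < ε/4 := hmod h2
      rw [Real.dist_eq, abs_lt] at h3
      rw [hF'app, h1]
      have : F x - ε/4 < F (p i) := by linarith [h3.2]
      linarith
    have hlower : F x + ε/4 ≤ ∑ i, w i * F' (p i) := by
      calc F x + ε/4 = ∑ i, w i * (F x + ε/4) := by
            rw [← Finset.sum_mul, hw1, one_mul]
        _ ≤ ∑ i, w i * F' (p i) :=
            Finset.sum_le_sum fun i _ => mul_le_mul_of_nonneg_left (hval i) (hw0 i)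
    have hgoal : F' x + ε/2 ≤ F x + ε/4 := by rw [hF'x]; linarith
    exact hgoal.trans (hlower.trans hkey)

set_option maxHeartbeats 1000000 in
/-- For generic `f`, the set where `f` coincides with the top of the convex hull of
its graph has Hausdorff dimension `0`. -/
theorem generic_coincidence_set_dimH_zero (d : ℕ) :
    ∃ G : Set C(Cube d, ℝ), Dense G ∧ IsGδ G ∧
      ∀ F ∈ G,
        dimH {x : Fin d → ℝ | ∃ hx : x ∈ Cube d, F ⟨x, hx⟩ = phi1C F x} = 0 := by
  refine ⟨⋂ n, UU d n, dense_iInter_of_isOpen (fun n => isOpen_UU n) (fun n => dense_UU n),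
    IsGδ.iInter (fun n => (isOpen_UU n).isGδ), ?_⟩
  intro F hF
  set E : Set (Fin d → ℝ) := {x | ∃ hx : x ∈ Cube d, F ⟨x, hx⟩ = phi1C F x} with hE
  -- extract witnesses for each n
  have hFn : ∀ n, F ∈ UU d n := fun n => mem_iInter.mp hF n
  choose t r δ hr0 hr1 hcard hδ hgap using hFn
  -- covering property
  have hcover : ∀ n, ∀ x ∈ E, ∃ p ∈ t n, dist x p < r n := by
    intro n x hx
    obtain ⟨hxc, hxe⟩ := hx
    by_contra hcon
    push_neg at hcon
    have := hgap n ⟨x, hxc⟩ (fun p hp => hcon p hp)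
    rw [hxe] at this
    linarith [hδ n]
  -- Hausdorff measure is zero in every positive dimension
  have hmeas : ∀ s : ℝ≥0, 0 < s → μH[(s:ℝ)] E = 0 := by
    intro s hs
    rw [← nonpos_iff_eq_zero, MeasureTheory.Measure.hausdorffMeasure_apply]
    refine iSup₂_le fun R hR => ?_
    have main : ∀ n : ℕ, ENNReal.ofReal (2/(n+1)) ≤ R → (1/((n:ℝ)+1) ≤ (s:ℝ)) →
        (⨅ (tc : ℕ → Set (Fin d → ℝ)) (_ : E ⊆ ⋃ i, tc i)
          (_ : ∀ i, EMetric.diam (tc i) ≤ R),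
          ∑' i, ⨆ _ : (tc i).Nonempty, EMetric.diam (tc i) ^ (s:ℝ)) ≤
        ENNReal.ofReal (2^(s:ℝ) * (1/(n+1))) := by
      intro n hn1 hn2
      set l : List (Fin d → ℝ) := (t n).toList with hl
      set tc : ℕ → Set (Fin d → ℝ) :=
        fun i => if h : i < l.length then Metric.ball (l.get ⟨i, h⟩) (r n) else ∅ with htc
      have hcov : E ⊆ ⋃ i, tc i := by
        intro x hx
        obtain ⟨p, hp, hdp⟩ := hcover n x hx
        obtain ⟨i, hi⟩ := List.mem_iff_get.mp ((Finset.mem_toList).mpr hp)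
        refine mem_iUnion.mpr ⟨i, ?_⟩
        rw [htc]
        simp only [hl, i.isLt, dif_pos, Fin.eta]
        rw [hi]
        exact mem_ball.mpr (by rwa [dist_comm] at hdp ⊢)
      have hdiam : ∀ i, EMetric.diam (tc i) ≤ R := by
        intro i
        rw [htc]
        by_cases h : i < l.length
        · simp only [dif_pos h]
          calc EMetric.diam (Metric.ball (l.get ⟨i, h⟩) (r n))
              ≤ 2 * ENNReal.ofReal (r n) := by
                rw [← Metric.emetric_ball]
                exact EMetric.diam_ball
            _ = ENNReal.ofReal (2 * r n) := by
                rw [ENNReal.ofReal_mul (by norm_num)]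
                norm_num
            _ ≤ ENNReal.ofReal (2/(n+1)) := by
                apply ENNReal.ofReal_le_ofReal
                have := hr1 n
                rw [div_eq_mul_one_div]
                linarith
            _ ≤ R := hn1
        · simp [h]
          exact EMetric.diam_empty.trans_le (zero_le)
      refine iInf_le_of_le tc (iInf_le_of_le hcov (iInf_le_of_le hdiam ?_))
      -- bound the sum
      have hterm : ∀ i, (⨆ _ : (tc i).Nonempty, EMetric.diam (tc i) ^ (s:ℝ)) ≤
          (if i < l.length then ENNReal.ofReal (2^(s:ℝ) * (r n)^((1:ℝ)/(n+1))) else 0) := by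
        intro i
        by_cases h : i < l.length
        · simp only [if_pos h]
          apply iSup_le
          intro _
          have hball : EMetric.diam (tc i) ≤ ENNReal.ofReal (2 * r n) := by
            rw [htc]
            simp only [dif_pos h]
            rw [← Metric.emetric_ball]
            refine le_trans EMetric.diam_ball (le_of_eq ?_)
            rw [ENNReal.ofReal_mul (by norm_num)]
            norm_num
          calc EMetric.diam (tc i) ^ (s:ℝ) ≤ (ENNReal.ofReal (2 * r n)) ^ (s:ℝ) :=
                ENNReal.rpow_le_rpow hball (by positivity)
            _ = ENNReal.ofReal ((2 * r n) ^ (s:ℝ)) :=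
                ENNReal.ofReal_rpow_of_pos (by linarith [hr0 n] : (0:ℝ) < 2 * r n)
            _ ≤ ENNReal.ofReal (2^(s:ℝ) * (r n)^((1:ℝ)/(n+1))) := by
                apply ENNReal.ofReal_le_ofReal
                rw [Real.mul_rpow (by norm_num) (hr0 n).le]
                apply mul_le_mul_of_nonneg_left _ (by positivity)
                apply Real.rpow_le_rpow_of_exponent_ge (hr0 n)
                · have h1 := hr1 n
                  have h2 : 1/((n:ℝ)+1) ≤ 1 := by
                    rw [div_le_one (by positivity)]
                    linarith [Nat.cast_nonneg (α := ℝ) n]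
                  linarith
                · exact hn2
        · rw [htc]
          simp [h]
      calc ∑' i, ⨆ _ : (tc i).Nonempty, EMetric.diam (tc i) ^ (s:ℝ)
          ≤ ∑' i, (if i < l.length then ENNReal.ofReal (2^(s:ℝ) * (r n)^((1:ℝ)/(n+1))) else 0) :=
            ENNReal.tsum_le_tsum hterm
        _ = ∑ i ∈ Finset.range l.length, ENNReal.ofReal (2^(s:ℝ) * (r n)^((1:ℝ)/(n+1))) := by
            rw [tsum_eq_sum (s := Finset.range l.length)]
            · apply Finset.sum_congr rfl
              intro i hi
              rw [if_pos (Finset.mem_range.mp hi)]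
            · intro i hi
              rw [if_neg (fun h => hi (Finset.mem_range.mpr h))]
        _ = (l.length : ℝ≥0∞) * ENNReal.ofReal (2^(s:ℝ) * (r n)^((1:ℝ)/(n+1))) := by
            rw [Finset.sum_const, Finset.card_range, nsmul_eq_mul]
        _ ≤ ENNReal.ofReal (2^(s:ℝ) * (1/(n+1))) := by
            rw [← ENNReal.ofReal_natCast, ← ENNReal.ofReal_mul (Nat.cast_nonneg _)]
            apply ENNReal.ofReal_le_ofReal
            have hc := hcard n
            have hlen : (l.length : ℝ) = ((t n).card : ℝ) := by
              rw [hl, Finset.length_toList]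
            rw [hlen]
            have h2s : (0:ℝ) < 2^(s:ℝ) := by positivity
            calc ((t n).card : ℝ) * (2^(s:ℝ) * (r n)^((1:ℝ)/(n+1)))
                = 2^(s:ℝ) * (((t n).card:ℝ) * (r n)^((1:ℝ)/(n+1))) := by ring
              _ ≤ 2^(s:ℝ) * (1/(n+1)) := mul_le_mul_of_nonneg_left hc.le h2s.le
      -- end calc
    -- choose n appropriately for each ε
    refine ENNReal.le_of_forall_pos_le_add fun ε hε _ => ?_
    rw [zero_add]
    -- find n
    have h2s : (0:ℝ) < 2^(s:ℝ) := by positivity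
    obtain ⟨n₂, hn₂⟩ := exists_nat_one_div_lt (show (0:ℝ) < (s:ℝ) from hs)
    obtain ⟨n₃, hn₃⟩ := exists_nat_one_div_lt (show (0:ℝ) < (ε:ℝ)/2^(s:ℝ) by positivity)
    have hRcase : ∃ n₁ : ℕ, ENNReal.ofReal (2/(n₁+1)) ≤ R := by
      rcases eq_or_ne R ⊤ with rfl | hRtop
      · exact ⟨0, le_top⟩
      · have hRpos : 0 < R.toReal := ENNReal.toReal_pos hR.ne' hRtop
        obtain ⟨n₁, hn₁⟩ := exists_nat_one_div_lt (show (0:ℝ) < R.toReal/2 by positivity)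
        refine ⟨n₁, ?_⟩
        have : (2:ℝ)/(n₁+1) ≤ R.toReal := by
          rw [div_lt_iff₀ (by positivity : (0:ℝ) < (n₁:ℝ)+1)] at hn₁
          rw [div_le_iff₀ (by positivity : (0:ℝ) < (n₁:ℝ)+1)]
          nlinarith
        calc ENNReal.ofReal (2/(n₁+1)) ≤ ENNReal.ofReal R.toReal :=
              ENNReal.ofReal_le_ofReal this
          _ = R := ENNReal.ofReal_toReal hRtop
    obtain ⟨n₁, hn₁⟩ := hRcase
    set n := max n₁ (max n₂ n₃) with hndef
    have hmono : ∀ k k' : ℕ, k ≤ k' → (1:ℝ)/((k':ℝ)+1) ≤ 1/((k:ℝ)+1) := by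
      intro k k' hk
      have : ((k:ℝ)+1) ≤ ((k':ℝ)+1) := by
        have : (k:ℝ) ≤ (k':ℝ) := by exact_mod_cast hk
        linarith
      gcongr
    have hc1 : ENNReal.ofReal (2/((n:ℝ)+1)) ≤ R := by
      refine le_trans (ENNReal.ofReal_le_ofReal ?_) hn₁
      have := hmono n₁ n (le_max_left _ _)
      rw [div_eq_mul_one_div, div_eq_mul_one_div (2:ℝ)]
      linarith
    have hc2 : 1/((n:ℝ)+1) ≤ (s:ℝ) := by
      have h1 := hmono n₂ n ((le_max_left _ _).trans (le_max_right _ _))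
      linarith
    calc (⨅ (tc : ℕ → Set (Fin d → ℝ)) (_ : E ⊆ ⋃ i, tc i)
          (_ : ∀ i, EMetric.diam (tc i) ≤ R),
          ∑' i, ⨆ _ : (tc i).Nonempty, EMetric.diam (tc i) ^ (s:ℝ))
        ≤ ENNReal.ofReal (2^(s:ℝ) * (1/(n+1))) := main n hc1 hc2
      _ ≤ ENNReal.ofReal ((ε:ℝ)) := by
          apply ENNReal.ofReal_le_ofReal
          have h1 := hmono n₃ n ((le_max_right _ _).trans (le_max_right _ _))
          have h2 : 2^(s:ℝ) * (1/((n₃:ℝ)+1)) ≤ 2^(s:ℝ) * ((ε:ℝ)/2^(s:ℝ)) :=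
            mul_le_mul_of_nonneg_left hn₃.le h2s.le
          have h3 : 2^(s:ℝ) * ((ε:ℝ)/2^(s:ℝ)) = (ε:ℝ) := by field_simp
          nlinarith [mul_le_mul_of_nonneg_left h1 h2s.le]
      _ = (ε : ℝ≥0∞) := ENNReal.ofReal_coe_nnreal
  -- conclude dimH = 0
  have hdim : ∀ s : ℝ≥0, 0 < s → dimH E ≤ s := by
    intro s hs
    exact dimH_le_of_hausdorffMeasure_ne_top (by rw [hmeas s hs]; exact ENNReal.zero_ne_top)
  refine le_antisymm ?_ (zero_le)
  refine ENNReal.le_of_forall_pos_le_add fun ε hε _ => ?_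
  rw [zero_add]
  exact hdim ε hε
end
end

section
/- Let f : [0,1]^d → ℝ be continuous. Then φ₁, the function on top of the convex hull H_f of the graph of f, is continuous on [0,1]^d. -/
open Set Metric Filter Topology

noncomputable section

private lemma aux_sum_pad {n m : ℕ} (hcard : m ≤ n) {M : Type*} [AddCommMonoid M]
    (G : Fin n → M) (hG : ∀ i : Fin n, ¬((i : ℕ) < m) → G i = 0) :
    ∑ i, G i = ∑ j : Fin m, G (Fin.castLE hcard j) := by
  have h1 : ∑ i ∈ Finset.univ.map (Fin.castLEEmb hcard), G i
      = ∑ j : Fin m, G (Fin.castLE hcard j) := by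
    rw [Finset.sum_map]; rfl
  rw [← h1]
  symm
  apply Finset.sum_subset (Finset.subset_univ _)
  intro i _ hi
  apply hG
  intro hlt
  exact hi (Finset.mem_map.mpr ⟨⟨i, hlt⟩, Finset.mem_univ _, rfl⟩)

lemma aux_isCompact_convexHull {E : Type*} [NormedAddCommGroup E] [NormedSpace ℝ E]
    [FiniteDimensional ℝ E] {s : Set E} (hs : IsCompact s) :
    IsCompact (convexHull ℝ s) := by
  classical
  rcases s.eq_empty_or_nonempty with rfl | ⟨p₀, hp₀⟩
  · simp
  set n := Module.finrank ℝ E + 1 with hn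
  set Φ : (Fin n → ℝ) × (Fin n → E) → E := fun p => ∑ i, p.1 i • p.2 i with hΦ
  have hΦc : Continuous Φ := by
    apply continuous_finset_sum
    intro i _
    exact ((continuous_apply i).comp continuous_fst).smul
      ((continuous_apply i).comp continuous_snd)
  have hK : IsCompact (stdSimplex ℝ (Fin n) ×ˢ Set.pi Set.univ fun _ : Fin n => s) :=
    (isCompact_stdSimplex ℝ (Fin n)).prod (isCompact_univ_pi fun _ => hs)
  have himg : convexHull ℝ s = Φ '' (stdSimplex ℝ (Fin n) ×ˢ Set.pi Set.univ fun _ => s) := by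
    apply Set.Subset.antisymm
    · intro x hx
      obtain ⟨ι, hι, z, w, hzs, hai, hw0, hw1, hwz⟩ := eq_pos_convex_span_of_mem_convexHull hx
      have hcard : Fintype.card ι ≤ n := by
        have h1 := hai.card_le_finrank_succ
        have h2 : Module.finrank ℝ (vectorSpan ℝ (Set.range z)) ≤ Module.finrank ℝ E :=
          Submodule.finrank_le _
        omega
      set e := Fintype.equivFin ι with he
      set w' : Fin n → ℝ :=
        fun i => if h : (i : ℕ) < Fintype.card ι then w (e.symm ⟨i, h⟩) else 0 with hw'
      set z' : Fin n → E :=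
        fun i => if h : (i : ℕ) < Fintype.card ι then z (e.symm ⟨i, h⟩) else p₀ with hz'
      have hcoe : ∀ j : Fin (Fintype.card ι),
          ∀ h : ((Fin.castLE hcard j : Fin n) : ℕ) < Fintype.card ι,
          (⟨(Fin.castLE hcard j : Fin n), h⟩ : Fin (Fintype.card ι)) = j := by
        intro j h; ext; rfl
      have hwsum : ∑ i, w' i = 1 := by
        refine (aux_sum_pad hcard w' (fun i hi => by simp [hw', hi])).trans ?_
        rw [← hw1, ← Equiv.sum_comp e.symm w]
        refine Finset.sum_congr rfl fun j _ => ?_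
        have hj : ((Fin.castLE hcard j : Fin n) : ℕ) < Fintype.card ι := j.2
        simp only [hw', dif_pos hj, hcoe j hj]
      have hzsum : ∑ i, w' i • z' i = x := by
        refine (aux_sum_pad hcard (fun i => w' i • z' i)
          (fun i hi => by simp [hw', hi])).trans ?_
        rw [← hwz, ← Equiv.sum_comp e.symm (fun i => w i • z i)]
        refine Finset.sum_congr rfl fun j _ => ?_
        have hj : ((Fin.castLE hcard j : Fin n) : ℕ) < Fintype.card ι := j.2
        simp only [hw', hz', dif_pos hj, hcoe j hj]
      refine ⟨(w', z'), ⟨⟨fun i => ?_, hwsum⟩, fun i _ => ?_⟩, hzsum⟩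
      · by_cases h : (i : ℕ) < Fintype.card ι
        · simp only [hw', dif_pos h]; exact le_of_lt (hw0 _)
        · simp [hw', h]
      · by_cases h : (i : ℕ) < Fintype.card ι
        · simp only [hz', dif_pos h]; exact hzs (Set.mem_range_self _)
        · simp [hz', h, hp₀]
    · rintro _ ⟨⟨w, z⟩, ⟨hw, hz⟩, rfl⟩
      exact mem_convexHull_of_exists_fintype w z hw.1 hw.2
        (fun i => hz i (Set.mem_univ i)) rfl
  rw [himg]
  exact hK.image hΦc

/-- The top of the convex hull of the graph of a continuous function on the cube is
continuous on the cube. -/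
theorem phi1_continuousOn (d : ℕ) (f : (Fin d → ℝ) → ℝ)
    (hf : ContinuousOn f (Cube d)) :
    ContinuousOn (phi1 d f) (Cube d) := by
  classical
  set S : Set ((Fin d → ℝ) × ℝ) := {p | p.1 ∈ Cube d ∧ p.2 = f p.1} with hSdef
  have hcube : IsCompact (Cube d) := isCompact_Icc
  have hSeq : S = (fun x => (x, f x)) '' Cube d := by
    ext ⟨a, b⟩
    constructor
    · rintro ⟨ha, hb⟩; exact ⟨a, ha, by simp only; rw [← hb]⟩
    · rintro ⟨x, hx, he⟩
      simp only [Prod.mk.injEq] at he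
      obtain ⟨rfl, rfl⟩ := he
      exact ⟨hx, rfl⟩
  have hScomp : IsCompact S := by
    rw [hSeq]
    exact hcube.image_of_continuousOn (continuousOn_id.prodMk hf)
  have hH : IsCompact (graphHull d f) := aux_isCompact_convexHull hScomp
  have hHcl : IsClosed (graphHull d f) := hH.isClosed
  have hSsub : S ⊆ graphHull d f := subset_convexHull ℝ S
  have hfib_ne : ∀ x ∈ Cube d, (x, f x) ∈ graphHull d f := fun x hx => hSsub ⟨hx, rfl⟩
  have hbdd : ∀ x : Fin d → ℝ, BddAbove {y | (x, y) ∈ graphHull d f} := by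
    intro x
    obtain ⟨C, hC⟩ := (hH.image continuous_snd).bddAbove
    exact ⟨C, fun y hy => hC ⟨(x, y), hy, rfl⟩⟩
  have hle : ∀ x y, (x, y) ∈ graphHull d f → y ≤ phi1 d f x :=
    fun x y hy => le_csSup (hbdd x) hy
  have hmem : ∀ x ∈ Cube d, (x, phi1 d f x) ∈ graphHull d f := by
    intro x hx
    have hcl : IsClosed {y | (x, y) ∈ graphHull d f} :=
      hHcl.preimage (Continuous.prodMk_right x)
    exact hcl.csSup_mem ⟨f x, hfib_ne x hx⟩ (hbdd x)
  -- uniform continuity of f on the cube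
  have hUC := hcube.uniformContinuousOn_of_continuous hf
  rw [Metric.uniformContinuousOn_iff] at hUC
  rw [Metric.continuousOn_iff]
  intro x₀ hx₀ ε hε
  -- upper semicontinuity at x₀
  have husc : ∃ δ > 0, ∀ x ∈ Cube d, dist x x₀ < δ → phi1 d f x < phi1 d f x₀ + ε := by
    by_contra h
    push_neg at h
    have h' : ∀ n : ℕ, ∃ x, x ∈ Cube d ∧ dist x x₀ < 1 / (n + 1) ∧
        phi1 d f x₀ + ε ≤ phi1 d f x := by
      intro n
      obtain ⟨x, hx1, hx2, hx3⟩ := h (1 / (n + 1)) (by positivity)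
      exact ⟨x, hx1, hx2, hx3⟩
    choose xs hxs1 hxs2 hxs3 using h'
    have hxs0 : Tendsto xs atTop (𝓝 x₀) := by
      rw [tendsto_iff_dist_tendsto_zero]
      exact squeeze_zero (fun n => dist_nonneg) (fun n => le_of_lt (hxs2 n))
        tendsto_one_div_add_atTop_nhds_zero_nat
    set u : ℕ → (Fin d → ℝ) × ℝ := fun n => (xs n, phi1 d f (xs n)) with hu
    obtain ⟨p, hpH, φ, hφ, hconv⟩ := hH.tendsto_subseq (fun n => hmem (xs n) (hxs1 n))
    have h1 : Tendsto (fun n => (u (φ n)).1) atTop (𝓝 p.1) :=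
      (continuous_fst.tendsto p).comp hconv
    have h1' : Tendsto (fun n => (u (φ n)).1) atTop (𝓝 x₀) :=
      hxs0.comp hφ.tendsto_atTop
    have hp1 : p.1 = x₀ := tendsto_nhds_unique h1 h1'
    have h2 : Tendsto (fun n => (u (φ n)).2) atTop (𝓝 p.2) :=
      (continuous_snd.tendsto p).comp hconv
    have hp2 : phi1 d f x₀ + ε ≤ p.2 := ge_of_tendsto' h2 (fun n => hxs3 (φ n))
    have hpmem : (x₀, p.2) ∈ graphHull d f := by rw [← hp1]; exact hpH
    have := hle x₀ p.2 hpmem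
    linarith
  -- lower semicontinuity at x₀
  have hlsc : ∃ δ > 0, ∀ x ∈ Cube d, dist x x₀ < δ → phi1 d f x₀ - ε < phi1 d f x := by
    obtain ⟨η, hη, hηf⟩ := hUC (ε / 2) (by positivity)
    set s : ℝ := min (η / 2) (1 / 2) with hs
    have hs0 : 0 < s := lt_min (by positivity) (by norm_num)
    have hs1 : s ≤ 1 / 2 := min_le_right _ _
    have hsη : s < η := lt_of_le_of_lt (min_le_left _ _) (by linarith)
    set g : ℝ → ℝ := fun u => if u = 0 ∨ u = 1 then 1 else min u (1 - u) with hg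
    have hgpos : ∀ i : Fin d, 0 < g (x₀ i) := by
      intro i
      by_cases hc : x₀ i = 0 ∨ x₀ i = 1
      · simp [hg, hc]
      · push_neg at hc
        have h0 : 0 ≤ x₀ i := hx₀.1 i
        have h1 : x₀ i ≤ 1 := hx₀.2 i
        simp only [hg, if_neg (not_or.mpr hc)]
        exact lt_min (lt_of_le_of_ne h0 (Ne.symm hc.1)) (by
          have := lt_of_le_of_ne h1 hc.2; linarith)
    obtain ⟨δ₀, hδ₀pos, hδ₀le1, hδ₀⟩ :
        ∃ δ₀, 0 < δ₀ ∧ δ₀ ≤ 1 ∧ ∀ i : Fin d, δ₀ ≤ g (x₀ i) := by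
      rcases isEmpty_or_nonempty (Fin d) with hE | hE
      · exact ⟨1, one_pos, le_refl 1, fun i => hE.elim i⟩
      · refine ⟨min 1 (Finset.univ.inf' Finset.univ_nonempty fun i => g (x₀ i)),
          lt_min one_pos ?_, min_le_left _ _, fun i => ?_⟩
        · rw [Finset.lt_inf'_iff]
          exact fun i _ => hgpos i
        · exact le_trans (min_le_right _ _)
            (Finset.inf'_le _ (Finset.mem_univ i))
    refine ⟨s * δ₀, by positivity, fun x hx hdist => ?_⟩
    -- affine contraction map
    set c : Fin d → ℝ := fun i => x i - (1 - s) * x₀ i with hc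
    have hcmem : ∀ i, 0 ≤ c i ∧ c i ≤ s := by
      intro i
      have hdi : |x i - x₀ i| < s * δ₀ := lt_of_le_of_lt (by
        have := dist_le_pi_dist x x₀ i
        rwa [Real.dist_eq] at this) hdist
      have hdi1 : x i - x₀ i < s * δ₀ := lt_of_le_of_lt (le_abs_self _) hdi
      have hdi2 : x₀ i - x i < s * δ₀ := lt_of_le_of_lt (by
        rw [← abs_sub_comm] at hdi ⊢; exact le_abs_self _) hdi
      have h0 : 0 ≤ x i := hx.1 i
      have h1 : x i ≤ 1 := hx.2 i
      have h00 : 0 ≤ x₀ i := hx₀.1 i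
      have h11 : x₀ i ≤ 1 := hx₀.2 i
      by_cases hcase : x₀ i = 0 ∨ x₀ i = 1
      · rcases hcase with h | h
        · have hgi : g (x₀ i) = 1 := by simp [hg, h]
          have : δ₀ ≤ 1 := hδ₀le1
          constructor
          · simp [hc, h]; linarith
          · simp only [hc, h]
            nlinarith [hδ₀ i, hgi]
        · have hgi : g (x₀ i) = 1 := by simp [hg, h]
          constructor
          · simp only [hc, h]
            nlinarith [hδ₀ i, hgi]
          · simp only [hc, h]; nlinarith
      · push_neg at hcase
        have hgi : g (x₀ i) = min (x₀ i) (1 - x₀ i) := by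
          simp [hg, hcase.1, hcase.2]
        have hd1 : δ₀ ≤ x₀ i := le_trans (hδ₀ i) (hgi ▸ min_le_left _ _)
        have hd2 : δ₀ ≤ 1 - x₀ i := le_trans (hδ₀ i) (hgi ▸ min_le_right _ _)
        constructor
        · simp only [hc]; nlinarith
        · simp only [hc]; nlinarith
    set T : (Fin d → ℝ) → (Fin d → ℝ) := fun y => (1 - s) • y + c with hT
    have hTcube : ∀ y ∈ Cube d, T y ∈ Cube d := by
      intro y hy
      constructor
      · intro i
        have := (hcmem i).1
        have h0 : 0 ≤ y i := hy.1 i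
        simp only [hT, Pi.add_apply, Pi.smul_apply, smul_eq_mul, Pi.zero_apply]
        nlinarith
      · intro i
        have := (hcmem i).2
        have h1 : y i ≤ 1 := hy.2 i
        have h0 : 0 ≤ y i := hy.1 i
        simp only [hT, Pi.add_apply, Pi.smul_apply, smul_eq_mul, Pi.one_apply]
        nlinarith
    have hTclose : ∀ y ∈ Cube d, dist (T y) y < η := by
      intro y hy
      have : dist (T y) y ≤ s := by
        rw [dist_pi_le_iff (le_of_lt hs0)]
        intro i
        rw [Real.dist_eq]
        have h0 : 0 ≤ y i := hy.1 i
        have h1 : y i ≤ 1 := hy.2 i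
        have hc1 := (hcmem i).1
        have hc2 := (hcmem i).2
        simp only [hT, Pi.add_apply, Pi.smul_apply, smul_eq_mul]
        rw [abs_le]
        constructor <;> nlinarith
      linarith
    -- representation of (x₀, phi1 x₀) as a convex combination
    have hx₀mem : (x₀, phi1 d f x₀) ∈ graphHull d f := hmem x₀ hx₀
    rw [graphHull, convexHull_eq] at hx₀mem
    obtain ⟨ι, t, w, z, hw0, hw1, hzS, hcm⟩ := hx₀mem
    rw [Finset.centerMass_eq_of_sum_1 _ _ hw1] at hcm
    have hfst : ∑ j ∈ t, w j • (z j).1 = x₀ := by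
      have h := congrArg Prod.fst hcm
      simp only [Prod.fst_sum, Prod.smul_fst] at h
      exact h
    have hsnd : ∑ j ∈ t, w j * f (z j).1 = phi1 d f x₀ := by
      have := congrArg Prod.snd hcm
      simp only [Prod.snd_sum, Prod.smul_snd, smul_eq_mul] at this
      rw [← this]
      exact Finset.sum_congr rfl fun j hj => by rw [(hzS j hj).2]
    -- the new convex combination witnessing a large value at x
    have hzc : ∀ j ∈ t, (z j).1 ∈ Cube d := fun j hj => (hzS j hj).1
    have hsumT : ∑ j ∈ t, w j • T (z j).1 = x := by
      have : ∑ j ∈ t, w j • T (z j).1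
          = (1 - s) • (∑ j ∈ t, w j • (z j).1) + (∑ j ∈ t, w j) • c := by
        rw [Finset.smul_sum, Finset.sum_smul, ← Finset.sum_add_distrib]
        refine Finset.sum_congr rfl fun j hj => ?_
        simp only [hT, smul_add, smul_comm (w j) (1 - s)]
      rw [this, hfst, hw1, one_smul]
      funext i
      simp only [Pi.add_apply, Pi.smul_apply, smul_eq_mul, hc]
      ring
    have hmemx : (x, ∑ j ∈ t, w j * f (T (z j).1)) ∈ graphHull d f := by
      have : (x, ∑ j ∈ t, w j * f (T (z j).1))
          = ∑ j ∈ t, w j • (T (z j).1, f (T (z j).1)) := by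
        rw [Prod.ext_iff]
        constructor
        · simp only [Prod.fst_sum, Prod.smul_fst]
          exact hsumT.symm
        · simp only [Prod.snd_sum, Prod.smul_snd, smul_eq_mul]
      rw [this]
      exact (convex_convexHull ℝ S).sum_mem hw0 hw1
        (fun j hj => hSsub ⟨hTcube _ (hzc j hj), rfl⟩)
    have hkey : ∑ j ∈ t, w j * f (T (z j).1) ≤ phi1 d f x := hle x _ hmemx
    have hsum_ge : phi1 d f x₀ - ε / 2 ≤ ∑ j ∈ t, w j * f (T (z j).1) := by
      have : ∀ j ∈ t, w j * (f ((z j).1) - ε / 2) ≤ w j * f (T (z j).1) := by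
        intro j hj
        have hzj := hzc j hj
        have hfnear : dist (f (T (z j).1)) (f ((z j).1)) < ε / 2 :=
          hηf _ (hTcube _ hzj) _ hzj (hTclose _ hzj)
        rw [Real.dist_eq, abs_lt] at hfnear
        exact mul_le_mul_of_nonneg_left (by linarith [hfnear.1]) (hw0 j hj)
      calc phi1 d f x₀ - ε / 2 = ∑ j ∈ t, w j * (f ((z j).1) - ε / 2) := by
            rw [Finset.sum_congr rfl fun j hj => mul_sub (w j) _ _,
              Finset.sum_sub_distrib, hsnd, ← Finset.sum_mul, hw1, one_mul]
        _ ≤ _ := Finset.sum_le_sum this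
    linarith
  obtain ⟨δ₁, hδ₁, h₁⟩ := husc
  obtain ⟨δ₂, hδ₂, h₂⟩ := hlsc
  refine ⟨min δ₁ δ₂, lt_min hδ₁ hδ₂, fun x hx hdx => ?_⟩
  have hu := h₁ x hx (lt_of_lt_of_le hdx (min_le_left _ _))
  have hl := h₂ x hx (lt_of_lt_of_le hdx (min_le_right _ _))
  rw [Real.dist_eq, abs_lt]
  constructor <;> linarith
end
end
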